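/- arXiv:1906.12133 — 2 statements merged into one kernel-verified Lean document; each statement's English description precedes it below -/
import Mathlib

section
/- For any timed symbolic weighted automaton W over ℝ and a complete semiring 𝕊, and any piecewise-constant signal σ, there exists a finite set {(Z₁,s₁),…,(Z_m,s_m)} of pairs of a zone over the two clocks {t_begin,t_end} and a semiring value, such that Z₁,…,Z_m partition the domain {(t,t') | 0 ≤ t < t' ≤ |σ|}, and for every pair (t,t') with 0 ≤ t < t' ≤ |σ| there exist i ∈ {1,…,m} and ν ∈ Zᵢ with ν(t_begin)=t, ν(t_end)=t', and (M(σ,W))(t,t') = sᵢ. -/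
attribute [local instance] Classical.propDecidable

namespace QTPM

/-- Comparison operators `<, ≤, >, ≥` used in constraints, guards and zones. -/
inductive CmpOp : Type
  | lt | le | gt | ge

/-- Semantics of a comparison operator on reals. -/
def CmpOp.eval : CmpOp → ℝ → ℝ → Prop
  | .lt, a, b => a < b
  | .le, a, b => a ≤ b
  | .gt, a, b => a > b
  | .ge, a, b => a ≥ b

/-- A semiring `𝕊 = (S, ⊕, ⊗, e⊕, e⊗)`: `(S,⊕,e⊕)` a commutative monoid,
`(S,⊗,e⊗)` a monoid, `⊗` distributing over `⊕` on both sides, `e⊕` absorbing for `⊗`. -/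
class CSemiring (S : Type) : Type where
  add : S → S → S
  mul : S → S → S
  zero : S
  one : S
  add_assoc : ∀ a b c : S, add (add a b) c = add a (add b c)
  add_comm : ∀ a b : S, add a b = add b a
  add_zero : ∀ a : S, add a zero = a
  mul_assoc : ∀ a b c : S, mul (mul a b) c = mul a (mul b c)
  mul_one : ∀ a : S, mul a one = a
  one_mul : ∀ a : S, mul one a = a
  left_distrib : ∀ a b c : S, mul a (add b c) = add (mul a b) (mul a c)
  right_distrib : ∀ a b c : S, mul (add a b) c = add (mul a c) (mul b c)
  zero_mul : ∀ a : S, mul zero a = zero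
  mul_zero : ∀ a : S, mul a zero = zero

/-- A semiring is idempotent if `s ⊕ s = s` for every `s`. -/
def Idem (S : Type) [CSemiring S] : Prop := ∀ s : S, CSemiring.add s s = s

/-- The canonical order of a semiring: `s ⪯ s'` iff `s ⊕ s' = s'`. -/
def csLe {S : Type} [CSemiring S] (s s' : S) : Prop := CSemiring.add s s' = s'

/-- A complete semiring: every (possibly infinite) family has a sum `⊕`, extending the
binary sum, invariant under partitions of the index set, and over which `⊗` distributes
on both sides. -/
class CompleteCSemiring (S : Type) [CSemiring S] : Type 1 where
  iSum : {ι : Type} → (ι → S) → S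
  iSum_empty : ∀ f : Empty → S, iSum f = CSemiring.zero
  iSum_single : ∀ f : Unit → S, iSum f = f ()
  iSum_pair : ∀ f : Bool → S, iSum f = CSemiring.add (f true) (f false)
  iSum_partition : ∀ {ι κ : Type} (p : ι → κ) (f : ι → S),
    iSum f = iSum fun k : κ => iSum fun i : {i : ι // p i = k} => f i.1
  mul_iSum : ∀ {ι : Type} (s : S) (f : ι → S),
    CSemiring.mul s (iSum f) = iSum fun i => CSemiring.mul s (f i)
  iSum_mul : ∀ {ι : Type} (f : ι → S) (s : S),
    CSemiring.mul (iSum f) s = iSum fun i => CSemiring.mul (f i) s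

/-- A piecewise-constant signal `σ = a₁^{τ₁} ⋯ a_n^{τ_n}`: a finite list of
(value, duration) pairs with positive durations. -/
structure Signal (X : Type) : Type where
  entries : List ((X → ℝ) × ℝ)
  pos : ∀ e ∈ entries, (0:ℝ) < e.2

namespace Signal

variable {X : Type}

/-- A default entry, used as a fallback value for out-of-range indexing. -/
noncomputable def dflt (X : Type) : (X → ℝ) × ℝ := (fun _ => 0, 1)

/-- Prefix sums of the durations: `pref σ i = τ₁ + ⋯ + τᵢ`. -/
noncomputable def pref (σ : Signal X) (i : ℕ) : ℝ := ((σ.entries.take i).map Prod.snd).sum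

/-- The duration `|σ| = τ₁ + ⋯ + τ_n` of a signal. -/
noncomputable def dur (σ : Signal X) : ℝ := (σ.entries.map Prod.snd).sum

/-- The number `n` of entries of the signal. -/
def len (σ : Signal X) : ℕ := σ.entries.length

/-- The value `a_{i+1}` of the `i`-th entry (0-indexed). -/
noncomputable def val (σ : Signal X) (i : ℕ) : X → ℝ := (σ.entries.getD i (dflt X)).1

/-- The value `σ(t)` of the signal at time `t`: the value `a_k` where
`τ₁+⋯+τ_{k-1} ≤ t < τ₁+⋯+τ_k`. -/
noncomputable def valAt (σ : Signal X) (t : ℝ) : X → ℝ :=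
  σ.val ((List.range σ.len).findIdx fun i => decide (t < σ.pref (i+1)))

end Signal

/-- Stutter-free sequences: the elements of `(ℝ^X)^⊛` (no two equal consecutive values). -/
def StutterFree {V : Type} (l : List V) : Prop := l.Chain' (· ≠ ·)

/-- Absorbing concatenation `∘` of (stutter-free) sequences: concatenate and merge
equal consecutive elements. -/
noncomputable def absCat {V : Type} (l l' : List V) : List V :=
  List.destutter (· ≠ ·) (l ++ l')

/-- `Values(σ([t,t')))`: the stutter-free sequence of values of `σ` on the
interval `[t,t')`. -/
noncomputable def Signal.valuesOn {X : Type} (σ : Signal X) (t t' : ℝ) : List (X → ℝ) :=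
  List.destutter (· ≠ ·)
    (((List.range σ.len).filter fun i => decide (σ.pref i < t' ∧ t < σ.pref (i+1))).map σ.val)

/-- The restriction `σ([t,t'))` of a signal to the interval `[t,t')`. -/
noncomputable def Signal.restrict {X : Type} (σ : Signal X) (t t' : ℝ) : Signal X where
  entries := (List.range σ.len).filterMap fun i =>
    if h : max (σ.pref i) t < min (σ.pref (i+1)) t' then
      some (σ.val i, min (σ.pref (i+1)) t' - max (σ.pref i) t)
    else none
  pos := by
    intro e he
    rw [List.mem_filterMap] at he
    obtain ⟨i, -, hi⟩ := he
    by_cases h : max (σ.pref i) t < min (σ.pref (i+1)) t'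
    · rw [dif_pos h] at hi
      injection hi with h'
      subst h'
      simpa using sub_pos.mpr h
    · rw [dif_neg h] at hi
      exact absurd hi (by simp)

/-- The constant signal `a^t`. -/
noncomputable def constSignal {X : Type} (a : X → ℝ) (t : ℝ) : Signal X where
  entries := if h : (0:ℝ) < t then [(a, t)] else []
  pos := by
    intro e he
    by_cases h : (0:ℝ) < t
    · rw [dif_pos h] at he
      simp only [List.mem_singleton] at he
      subst he
      exact h
    · rw [dif_neg h] at he
      simp at he

/-- Clock guards: finite conjunctions of `c ⋈ d` with `d ∈ ℤ≥0`. -/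
abbrev Guard (C : Type) : Type := List (C × CmpOp × ℕ)

/-- Constraints over the variables `X`: finite conjunctions of `x ⋈ d` with `d ∈ ℝ`. -/
abbrev VarConstraint (X : Type) : Type := List (X × CmpOp × ℝ)

/-- A timed symbolic automaton (TSA) over `ℝ`, with locations `L` and clocks `C`. -/
structure TSA (X L C : Type) : Type where
  L₀ : Set L
  LF : Set L
  Δ : Set (L × Guard C × Set C × L)
  Δ_finite : Δ.Finite
  Λ : L → VarConstraint X

/-- A timed symbolic weighted automaton (TSWA) over `ℝ` and a complete semiring `S`:
a TSA together with a cost function `κ`. -/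
structure TSWA (X L C S : Type) [CSemiring S] [CompleteCSemiring S]
    extends TSA X L C : Type where
  κ : VarConstraint X → List (X → ℝ) → S

/-- Satisfaction `ν ⊨ g` of a clock guard. -/
def guardSat {C : Type} (ν : C → ℝ) (g : Guard C) : Prop :=
  ∀ p ∈ g, p.2.1.eval (ν p.1) (p.2.2 : ℝ)

/-- The reset `ν[ρ := 0]` of a clock valuation. -/
noncomputable def resetVal {C : Type} (ν : C → ℝ) (ρ : Set C) : C → ℝ :=
  fun c => if c ∈ ρ then 0 else ν c

/-- States of the WTTS: `(l, ν, t, ā)`. -/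
abbrev WState (X L C : Type) : Type := L × (C → ℝ) × ℝ × List (X → ℝ)

/-- The state space `Q` of the WTTS of `σ` and a TSWA. -/
def wttsQ {X L C : Type} (σ : Signal X) : Set (WState X L C) :=
  {q | (∀ c, 0 ≤ q.2.1 c) ∧ 0 ≤ q.2.2.1 ∧ q.2.2.1 ≤ σ.dur ∧ StutterFree q.2.2.2}

/-- The initial states `Q₀ = {(l₀, 0⃗, 0, ε) | l₀ ∈ L₀}` of the WTTS. -/
def wttsQ0 {X L C : Type} (A : TSA X L C) : Set (WState X L C) :=
  {q | q.1 ∈ A.L₀ ∧ q.2.1 = (fun _ => 0) ∧ q.2.2.1 = 0 ∧ q.2.2.2 = []}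

/-- The accepting states `Q_F = {(l_F, ν, |σ|, ε) | l_F ∈ L_F}` of the WTTS. -/
def wttsQF {X L C : Type} (σ : Signal X) (A : TSA X L C) : Set (WState X L C) :=
  {q | q.1 ∈ A.LF ∧ (∀ c, 0 ≤ q.2.1 c) ∧ q.2.2.1 = σ.dur ∧ q.2.2.2 = []}

/-- The transition relation `→` of the WTTS of `σ` and (the TSA of) a TSWA:
either a discrete transition of the TSA, or time elapse. -/
def wttsStep {X L C : Type} (σ : Signal X) (A : TSA X L C)
    (q q' : WState X L C) : Prop :=
  q ∈ wttsQ σ ∧ q' ∈ wttsQ σ ∧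
  ((∃ g ρ, (q.1, g, ρ, q'.1) ∈ A.Δ ∧ guardSat q.2.1 g ∧ q'.2.1 = resetVal q.2.1 ρ ∧
      q'.2.2.1 = q.2.2.1 ∧ q.2.2.2 ≠ [] ∧ q'.2.2.2 = []) ∨
   (q.1 = q'.1 ∧ ∃ τ : ℝ, 0 < τ ∧ q'.2.1 = (fun c => q.2.1 c + τ) ∧
      q'.2.2.1 = q.2.2.1 + τ ∧
      q'.2.2.2 = absCat q.2.2.2 (σ.valuesOn q.2.2.1 (q.2.2.1 + τ))))

/-- The weight of a WTTS transition: `κ(Λ(l), ā)` if `ā' = ε`, and `e⊗` otherwise. -/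
noncomputable def wttsWeight {X L C S : Type} [CSemiring S] [CompleteCSemiring S]
    (W : TSWA X L C S) (q q' : WState X L C) : S :=
  if q'.2.2.2 = [] then W.κ (W.Λ q.1) q.2.2.2 else CSemiring.one

/-- A path of a transition system: a finite sequence of states related by
consecutive transitions. -/
def IsPath {Q : Type} (step : Q → Q → Prop) (π : List Q) : Prop := π.Chain' step

/-- The path value: the `⊗`-product of the weights of the transitions of a path. -/
noncomputable def pathVal {Q S : Type} [CSemiring S] [CompleteCSemiring S]
    (w : Q → Q → S) : List Q → S
  | [] => CSemiring.one
  | [_] => CSemiring.one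
  | q :: q' :: r => CSemiring.mul (w q q') (pathVal w (q' :: r))

/-- The set of paths from a state of `A` to a state of `B`. -/
def PathsBetween {Q : Type} (step : Q → Q → Prop) (A B : Set Q) : Set (List Q) :=
  {π | IsPath step π ∧ (∃ a ∈ A, π.head? = some a) ∧ (∃ b ∈ B, π.getLast? = some b)}

/-- The shortest distance from `A` to `B`: the `⊕`-sum, over all paths from `A` to `B`,
of the `⊗`-product of the transition weights. -/
noncomputable def sDist {Q S : Type} [CSemiring S] [CompleteCSemiring S]
    (step : Q → Q → Prop) (w : Q → Q → S) (A B : Set Q) : S :=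
  CompleteCSemiring.iSum fun π : ↥(PathsBetween step A B) => pathVal w π.1

/-- The trace value `α(S)` of the WTTS `S` of `σ` and `W`: the shortest distance from
the initial states to the accepting states, i.e. `⊕_{π ∈ ARuns(S)} μ(π)`. -/
noncomputable def traceValue {X L C S : Type} [CSemiring S] [CompleteCSemiring S]
    (σ : Signal X) (W : TSWA X L C S) : S :=
  sDist (wttsStep σ W.toTSA) (wttsWeight W) (wttsQ0 W.toTSA) (wttsQF σ W.toTSA)

/-- The clocks `C ⊔ {T}`: `none` is the fresh clock `T` tracking absolute time. -/
abbrev ClockT (C : Type) : Type := Option C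

/-- Symbolic states of the WSTTS: `(l, Z, ā)`. -/
abbrev SymState (X L C : Type) : Type := L × Set (ClockT C → ℝ) × List (X → ℝ)

/-- A zone over the clock set `C'`: a set of clock valuations defined by a finite
conjunction of constraints `c ⋈ d` and `c − c' ⋈ d`. -/
def IsZone {C' : Type} (Z : Set (C' → ℝ)) : Prop :=
  ∃ atoms : List ((C' × CmpOp × ℝ) ⊕ (C' × C' × CmpOp × ℝ)),
    Z = {ν | ∀ a ∈ atoms,
      match a with
      | .inl p => p.2.1.eval (ν p.1) p.2.2
      | .inr p => p.2.2.1.eval (ν p.1 - ν p.2.1) p.2.2.2}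

/-- The symbolic state space `Q^sym` of the WSTTS of `σ` and a TSWA. -/
def symQ {X L C : Type} (σ : Signal X) : Set (SymState X L C) :=
  {q | IsZone q.2.1 ∧ q.2.1.Nonempty ∧ (∀ ν ∈ q.2.1, ν none ≤ σ.dur) ∧
    StutterFree q.2.2 ∧
    (q.2.2 = [] ∨ ∀ ν ∈ q.2.1, absCat q.2.2 [σ.valAt (ν none)] = q.2.2)}

/-- The all-zero clock valuation over `C ⊔ {T}`. -/
noncomputable def zeroValT {C : Type} : ClockT C → ℝ := fun _ => 0

/-- The initial symbolic states `Q₀^sym = {(l₀, {0⃗}, ε) | l₀ ∈ L₀}`. -/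
def symQ0 {X L C : Type} (A : TSA X L C) : Set (SymState X L C) :=
  {q | q.1 ∈ A.L₀ ∧ q.2.1 = {zeroValT} ∧ q.2.2 = []}

/-- The accepting symbolic states
`Q_F^sym = {(l_F, Z, ε) ∈ Q^sym | ∃ν ∈ Z, ν(T) = |σ|}`. -/
def symQF {X L C : Type} (σ : Signal X) (A : TSA X L C) : Set (SymState X L C) :=
  {q | q ∈ symQ σ ∧ q.1 ∈ A.LF ∧ q.2.2 = [] ∧ ∃ ν ∈ q.2.1, ν none = σ.dur}

/-- The reset `ν[ρ := 0]` of a valuation over `C ⊔ {T}` (the clock `T` is never reset). -/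
noncomputable def symResetVal {C : Type} (ν : ClockT C → ℝ) (ρ : Set C) : ClockT C → ℝ :=
  fun c => match c with
    | none => ν none
    | some c' => if c' ∈ ρ then 0 else ν (some c')

/-- The up-closure `{ν + τ | ν ∈ Z, τ > 0}` of a zone under time elapse. -/
def upClosure {C : Type} (Z : Set (ClockT C → ℝ)) : Set (ClockT C → ℝ) :=
  {ν' | ∃ ν ∈ Z, ∃ τ : ℝ, 0 < τ ∧ ν' = fun c => ν c + τ}

/-- The transition relation `→^sym` of the WSTTS of `σ` and (the TSA of) a TSWA:
a discrete transition of the TSA, a punctual time elapse, or a non-punctual time elapse. -/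
def symStep {X L C : Type} (σ : Signal X) (A : TSA X L C)
    (q q' : SymState X L C) : Prop :=
  q ∈ symQ σ ∧ q' ∈ symQ σ ∧
  ((∃ g ρ, (q.1, g, ρ, q'.1) ∈ A.Δ ∧
      q'.2.1 = {ν' | ∃ ν ∈ q.2.1, guardSat (fun c => ν (some c)) g ∧ ν' = symResetVal ν ρ} ∧
      q.2.2 ≠ [] ∧ q'.2.2 = []) ∨
   (q.1 = q'.1 ∧
      (∃ ν ∈ q.2.1, ∃ ν' ∈ q'.2.1, q'.2.2 = absCat q.2.2 (σ.valuesOn (ν none) (ν' none))) ∧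
      (∃ i, 1 ≤ i ∧ i ≤ σ.len ∧
        (q'.2.1 = upClosure q.2.1 ∩ {ν | ν none = σ.pref i} ∨
         q'.2.1 = upClosure q.2.1 ∩ {ν | σ.pref (i-1) < ν none ∧ ν none < σ.pref i}))))

/-- The weight of a WSTTS transition: `κ(Λ(l), ā)` if `ā' = ε`, and `e⊗` otherwise. -/
noncomputable def symWeight {X L C S : Type} [CSemiring S] [CompleteCSemiring S]
    (W : TSWA X L C S) (q q' : SymState X L C) : S :=
  if q'.2.2 = [] then W.κ (W.Λ q.1) q.2.2 else CSemiring.one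

/-- The symbolic trace value `α^sym(S^sym)`: the shortest distance from the initial
symbolic states to the accepting symbolic states, i.e. `⊕_{π ∈ ARuns(S^sym)} μ^sym(π)`. -/
noncomputable def symTraceValue {X L C S : Type} [CSemiring S] [CompleteCSemiring S]
    (σ : Signal X) (W : TSWA X L C S) : S :=
  sDist (symStep σ W.toTSA) (symWeight W) (symQ0 W.toTSA) (symQF σ W.toTSA)

/-- `Reach`: the initial states together with all states reachable from them. -/
def reach {Q : Type} (step : Q → Q → Prop) (init : Set Q) : Set Q :=
  {q | ∃ q0 ∈ init, Relation.ReflTransGen step q0 q}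

/-- Tuples `(l, Z, ā, s)` occurring in intermediate weights. -/
abbrev WTuple (X L C S : Type) : Type := L × Set (ClockT C → ℝ) × List (X → ℝ) × S

/-- The increment function `incr(a,t)`: maps a set `w` of tuples `(l,Z,ā,s)` to the set
of tuples `(l',Z',ā',s')` such that every `ν' ∈ Z'` satisfies `ν'(T) = t` and
`s' = ⊕_{(l,Z,ā,s)∈w} s ⊗ Dist({(l,Z,ā)},{(l',Z',ā')})` computed in the WSTTS of the
constant signal `a^t` and `W`. -/
noncomputable def incr {X L C S : Type} [CSemiring S] [CompleteCSemiring S]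
    (W : TSWA X L C S) (a : X → ℝ) (t : ℝ)
    (w : Set (WTuple X L C S)) : Set (WTuple X L C S) :=
  {p | IsZone p.2.1 ∧ StutterFree p.2.2.1 ∧ (∀ ν ∈ p.2.1, ν none = t) ∧
    p.2.2.2 = CompleteCSemiring.iSum fun q : ↥w =>
      CSemiring.mul q.1.2.2.2
        (sDist (symStep (constSignal a t) W.toTSA) (symWeight W)
          ({(q.1.1, q.1.2.1, q.1.2.2.1)} : Set (SymState X L C))
          ({(p.1, p.2.1, p.2.2.1)} : Set (SymState X L C)))}

/-- The intermediate weight `weight_i = (incr(a_i,T_i) ∘ ⋯ ∘ incr(a₁,T₁))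
({(l₀,{0⃗},ε,e⊗) | l₀ ∈ L₀})`, where `T_j = τ₁ + ⋯ + τ_j`. -/
noncomputable def weightSeq {X L C S : Type} [CSemiring S] [CompleteCSemiring S]
    (σ : Signal X) (W : TSWA X L C S) : ℕ → Set (WTuple X L C S)
  | 0 => {p | p.1 ∈ W.L₀ ∧ p.2.1 = {zeroValT} ∧ p.2.2.1 = [] ∧ p.2.2.2 = CSemiring.one}
  | i + 1 => incr W (σ.val i) (σ.pref (i+1)) (weightSeq σ W i)

/-- The extension of a clock valuation over `C` to `C ⊔ {T}`, assigning `t` to `T`. -/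
def extT {C : Type} (ν : C → ℝ) (t : ℝ) : ClockT C → ℝ :=
  fun c => match c with
    | none => t
    | some c' => ν c'

/-- The restriction `ν|_C` of a clock valuation over `C ⊔ {T}` to `C`. -/
def restrC {C : Type} (ν : ClockT C → ℝ) : C → ℝ := fun c => ν (some c)

/-- The extension of a clock valuation over `C ⊔ {T}` to `C ⊔ {T, 0}`, where the
reference clock `0` (encoded as `none`) has constant value `0`. -/
def extRef {C : Type} (ν : ClockT C → ℝ) : Option (ClockT C) → ℝ :=
  fun c => match c with
    | none => 0
    | some c' => ν c'

/-- The canonical bound `d_{Z,c,c'}` of a zone: the least constant bounding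
`ν(c) − ν(c')` over `Z` (with `∞ = ⊤` when unbounded). -/
noncomputable def zoneBound {C : Type} (Z : Set (ClockT C → ℝ))
    (c c' : Option (ClockT C)) : EReal :=
  sSup ((fun ν => ((extRef ν c - extRef ν c' : ℝ) : EReal)) '' Z)

end QTPM
namespace QTPM
section SecA
variable {S : Type} [CSemiring S] [CompleteCSemiring S]

open CompleteCSemiring CSemiring

lemma iSum_congr {ι : Type} {f g : ι → S} (h : ∀ i, f i = g i) : iSum f = iSum g :=
  congrArg iSum (funext h)

lemma iSum_unit_pred (P : Unit → Prop) (hP : P ()) (c : S) :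
    iSum (fun _ : Subtype P => c) = c := by
  have hpred : P = fun u : Unit => id u = () := by
    funext u
    exact propext ⟨fun _ => rfl, fun _ => by cases u; exact hP⟩
  subst hpred
  have h := iSum_partition (p := (id : Unit → Unit)) (f := fun _ : Unit => c)
  rw [iSum_single, iSum_single (f := fun k : Unit => _)] at h
  exact h.symm

lemma iSum_const_unique {T : Type} (t₀ : T) (h : ∀ t : T, t = t₀) (c : S) :
    iSum (fun _ : T => c) = c := by
  have hpart := iSum_partition (p := fun _ : Unit => t₀) (f := fun _ : Unit => c)
  rw [iSum_single] at hpart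
  -- hpart : c = iSum fun t : T => iSum fun u : {u : Unit // t₀ = t} => c
  have hinner : ∀ t : T, (iSum fun _ : {u : Unit // (fun _ : Unit => t₀) u = t} => c) = c := by
    intro t
    exact iSum_unit_pred (fun _ : Unit => t₀ = t) (h t).symm c
  calc iSum (fun _ : T => c) = iSum fun t : T =>
        iSum fun _ : {u : Unit // (fun _ : Unit => t₀) u = t} => c :=
          iSum_congr (fun t => (hinner t).symm)
    _ = c := hpart.symm

lemma iSum_unique {T : Type} (t₀ : T) (h : ∀ t : T, t = t₀) (g : T → S) :
    iSum g = g t₀ := by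
  have h1 : iSum g = iSum (fun _ : T => g t₀) := iSum_congr (fun t => by rw [h t])
  rw [h1, iSum_const_unique t₀ h]

lemma iSum_equiv {ι κ : Type} (e : ι ≃ κ) (f : κ → S) :
    iSum (fun i => f (e i)) = iSum f := by
  rw [iSum_partition (p := fun i => e i) (f := fun i => f (e i))]
  apply iSum_congr
  intro k
  have := iSum_unique (S := S) (T := {i : ι // e i = k})
      ⟨e.symm k, e.apply_symm_apply k⟩
      (fun x => Subtype.ext (e.injective (x.2.trans (e.apply_symm_apply k).symm)))
      (fun x => f (e x.1))
  rw [this, e.apply_symm_apply]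

end SecA
end QTPM
namespace QTPM
section SecB

/-- The strict-chain relation on control points. -/
def Rlt (p q : ℝ × ℝ) : Prop := p.1 < q.1 ∧ p.2 < q.2

instance : IsTrans (ℝ × ℝ) Rlt :=
  ⟨fun _ _ _ h h' => ⟨h.1.trans h'.1, h.2.trans h'.2⟩⟩

/-- Piecewise-linear interpolation through a list of control points. -/
noncomputable def pwl : List (ℝ × ℝ) → ℝ → ℝ
  | [] => fun x => x
  | [p] => fun x => x - p.1 + p.2
  | p :: q :: l => fun x =>
      if x ≤ p.1 then x - p.1 + p.2
      else if x ≤ q.1 then p.2 + (x - p.1) * ((q.2 - p.2) / (q.1 - p.1))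
      else pwl (q :: l) x

lemma rlt_of_chain' {p : ℝ × ℝ} {rest : List (ℝ × ℝ)} (h : List.Chain' Rlt (p :: rest))
    {r : ℝ × ℝ} (hr : r ∈ rest) : Rlt p r := by
  rw [List.Chain', List.isChain_iff_pairwise] at h
  exact (List.pairwise_cons.mp h).1 r hr

lemma pwl_value : ∀ (l : List (ℝ × ℝ)), List.Chain' Rlt l → ∀ p ∈ l, pwl l p.1 = p.2
  | [], _, p, hp => absurd hp List.not_mem_nil
  | [p], _, r, hr => by
      rcases List.mem_singleton.mp hr with rfl
      simp [pwl]
  | p :: q :: l, hch, r, hr => by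
      have hpq : Rlt p q := hch.rel_head
      have hch' : List.Chain' Rlt (q :: l) := hch.tail
      rcases List.mem_cons.mp hr with rfl | hr'
      · simp [pwl]
      · have hpr : Rlt p r := rlt_of_chain' hch hr'
        rcases List.mem_cons.mp hr' with rfl | hr''
        · have h1 : ¬ r.1 ≤ p.1 := not_le.mpr hpr.1
          have h2 : r.1 - p.1 ≠ 0 := sub_ne_zero.mpr (ne_of_gt hpr.1)
          simp only [pwl, if_neg h1, if_pos (le_refl r.1)]
          field_simp
          ring
        · have hqr : Rlt q r := rlt_of_chain' hch' hr''
          have h1 : ¬ r.1 ≤ p.1 := not_le.mpr hpr.1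
          have h2 : ¬ r.1 ≤ q.1 := not_le.mpr hqr.1
          simp only [pwl, if_neg h1, if_neg h2]
          exact pwl_value (q :: l) hch' r hr'

lemma pwl_strictMono : ∀ (l : List (ℝ × ℝ)), List.Chain' Rlt l → StrictMono (pwl l)
  | [], _ => by exact strictMono_id
  | [p], _ => fun x y h => by simp only [pwl]; linarith
  | p :: q :: l, hch => by
      have hpq : Rlt p q := hch.rel_head
      have hch' : List.Chain' Rlt (q :: l) := hch.tail
      have ihm : StrictMono (pwl (q :: l)) := pwl_strictMono (q :: l) hch'
      have hqval : pwl (q :: l) q.1 = q.2 := pwl_value (q :: l) hch' q List.mem_cons_self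
      have hs : 0 < (q.2 - p.2) / (q.1 - p.1) :=
        div_pos (sub_pos.mpr hpq.2) (sub_pos.mpr hpq.1)
      set s := (q.2 - p.2) / (q.1 - p.1) with hsdef
      have h1ne : q.1 - p.1 ≠ 0 := sub_ne_zero.mpr (ne_of_gt hpq.1)
      have hq2 : p.2 + (q.1 - p.1) * s = q.2 := by
        have : (q.1 - p.1) * s = q.2 - p.2 := by
          rw [hsdef, mul_div_assoc']; exact mul_div_cancel_left₀ _ h1ne
        linarith
      intro x y hxy
      simp only [pwl]
      by_cases hx1 : x ≤ p.1
      · rw [if_pos hx1]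
        by_cases hy1 : y ≤ p.1
        · rw [if_pos hy1]; linarith
        · rw [if_neg hy1]
          by_cases hy2 : y ≤ q.1
          · rw [if_pos hy2]
            have : 0 < (y - p.1) * s := mul_pos (by linarith) hs
            linarith
          · rw [if_neg hy2]
            have : q.2 < pwl (q :: l) y := hqval ▸ ihm (not_le.mp hy2)
            linarith [hpq.2]
      · rw [if_neg hx1]
        have hx1' : p.1 < x := not_le.mp hx1
        have hy1 : ¬ y ≤ p.1 := not_le.mpr (by linarith)
        rw [if_neg hy1]
        by_cases hx2 : x ≤ q.1
        · rw [if_pos hx2]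
          by_cases hy2 : y ≤ q.1
          · rw [if_pos hy2]
            have := mul_lt_mul_of_pos_right (show x - p.1 < y - p.1 by linarith) hs
            linarith
          · rw [if_neg hy2]
            have h1 : p.2 + (x - p.1) * s ≤ q.2 := by
              have := mul_le_mul_of_nonneg_right (show x - p.1 ≤ q.1 - p.1 by linarith) hs.le
              linarith
            have : q.2 < pwl (q :: l) y := hqval ▸ ihm (not_le.mp hy2)
            linarith
        · rw [if_neg hx2]
          have hy2 : ¬ y ≤ q.1 := not_le.mpr (by linarith [not_le.mp hx2])
          rw [if_neg hy2]
          exact ihm hxy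

lemma pwl_inverse : ∀ (l : List (ℝ × ℝ)), List.Chain' Rlt l →
    ∀ x, pwl (l.map Prod.swap) (pwl l x) = x
  | [], _, x => by simp [pwl]
  | [p], _, x => by simp [pwl]
  | p :: q :: l, hch, x => by
      have hpq : Rlt p q := hch.rel_head
      have hch' : List.Chain' Rlt (q :: l) := hch.tail
      have ihm : StrictMono (pwl (q :: l)) := pwl_strictMono (q :: l) hch'
      have hqval : pwl (q :: l) q.1 = q.2 := pwl_value (q :: l) hch' q List.mem_cons_self
      have h1ne : q.1 - p.1 ≠ 0 := sub_ne_zero.mpr (ne_of_gt hpq.1)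
      have h2ne : q.2 - p.2 ≠ 0 := sub_ne_zero.mpr (ne_of_gt hpq.2)
      have hs : 0 < (q.2 - p.2) / (q.1 - p.1) :=
        div_pos (sub_pos.mpr hpq.2) (sub_pos.mpr hpq.1)
      simp only [pwl, List.map_cons]
      by_cases hx1 : x ≤ p.1
      · rw [if_pos hx1]
        have : x - p.1 + p.2 ≤ p.2 := by linarith
        rw [if_pos (show x - p.1 + p.2 ≤ (Prod.swap p).1 from this)]
        simp [Prod.swap]
      · rw [if_neg hx1]
        have hx1' : p.1 < x := not_le.mp hx1
        by_cases hx2 : x ≤ q.1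
        · rw [if_pos hx2]
          set y := p.2 + (x - p.1) * ((q.2 - p.2) / (q.1 - p.1)) with hydef
          have hy1 : ¬ y ≤ (Prod.swap p).1 := by
            simp only [Prod.fst_swap]
            have : 0 < (x - p.1) * ((q.2 - p.2) / (q.1 - p.1)) :=
              mul_pos (by linarith) hs
            rw [hydef]; push_neg; linarith
          have hy2 : y ≤ (Prod.swap q).1 := by
            simp only [Prod.fst_swap]
            have := mul_le_mul_of_nonneg_right
              (show x - p.1 ≤ q.1 - p.1 by linarith) hs.le
            have hq2 : p.2 + (q.1 - p.1) * ((q.2 - p.2) / (q.1 - p.1)) = q.2 := by field_simp; ring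
            rw [hydef]; linarith
          rw [if_neg hy1, if_pos hy2]
          simp only [Prod.fst_swap, Prod.snd_swap]
          rw [hydef]
          field_simp
          ring
        · rw [if_neg hx2]
          set y := pwl (q :: l) x with hydef
          have hygt : q.2 < y := hqval ▸ ihm (not_le.mp hx2)
          have hy1 : ¬ y ≤ (Prod.swap p).1 := by
            simp only [Prod.fst_swap]; push_neg; linarith [hpq.2]
          have hy2 : ¬ y ≤ (Prod.swap q).1 := by
            simp only [Prod.fst_swap]; push_neg; linarith
          rw [if_neg hy1, if_neg hy2]
          exact pwl_inverse (q :: l) hch' x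

end SecB
end QTPM
namespace QTPM
section SecB2

/-- The warp function: integer part plus interpolated fractional part. -/
noncomputable def warp (ctrl : List (ℝ × ℝ)) (x : ℝ) : ℝ :=
  (⌊x⌋ : ℝ) + pwl ctrl (Int.fract x)

variable {ctrl : List (ℝ × ℝ)}

lemma pwl_zero (hch : List.Chain' Rlt ctrl) (h0 : (0, 0) ∈ ctrl) : pwl ctrl 0 = 0 :=
  pwl_value ctrl hch (0, 0) h0

lemma pwl_one (hch : List.Chain' Rlt ctrl) (h1 : (1, 1) ∈ ctrl) : pwl ctrl 1 = 1 :=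
  pwl_value ctrl hch (1, 1) h1

lemma pwl_mem_Ico (hch : List.Chain' Rlt ctrl) (h0 : (0, 0) ∈ ctrl) (h1 : (1, 1) ∈ ctrl)
    {r : ℝ} (hr : 0 ≤ r) (hr1 : r < 1) : 0 ≤ pwl ctrl r ∧ pwl ctrl r < 1 := by
  have hm := pwl_strictMono ctrl hch
  constructor
  · rw [← pwl_zero hch h0]; exact hm.le_iff_le.mpr hr
  · rw [← pwl_one hch h1]; exact hm hr1

lemma warp_floor (hch : List.Chain' Rlt ctrl) (h0 : (0, 0) ∈ ctrl) (h1 : (1, 1) ∈ ctrl)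
    (x : ℝ) : ⌊warp ctrl x⌋ = ⌊x⌋ ∧ Int.fract (warp ctrl x) = pwl ctrl (Int.fract x) := by
  obtain ⟨ha, hb⟩ := pwl_mem_Ico hch h0 h1 (Int.fract_nonneg x) (Int.fract_lt_one x)
  have hz : ⌊pwl ctrl (Int.fract x)⌋ = (0 : ℤ) :=
    Int.floor_eq_iff.mpr ⟨by exact_mod_cast ha, by push_cast; linarith⟩
  have hfl : ⌊warp ctrl x⌋ = ⌊x⌋ := by
    simp only [warp, add_comm (⌊x⌋ : ℝ), Int.floor_add_intCast, hz, zero_add]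
  refine ⟨hfl, ?_⟩
  rw [Int.fract, hfl]
  simp only [warp]; ring

lemma warp_strictMono (hch : List.Chain' Rlt ctrl) (h0 : (0, 0) ∈ ctrl)
    (h1 : (1, 1) ∈ ctrl) : StrictMono (warp ctrl) := by
  intro x y hxy
  have hm := pwl_strictMono ctrl hch
  have hfx := pwl_mem_Ico hch h0 h1 (Int.fract_nonneg x) (Int.fract_lt_one x)
  have hfy := pwl_mem_Ico hch h0 h1 (Int.fract_nonneg y) (Int.fract_lt_one y)
  rcases lt_or_eq_of_le (Int.floor_le_floor hxy.le) with hf | hf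
  · have : (⌊x⌋ : ℝ) + 1 ≤ (⌊y⌋ : ℝ) := by exact_mod_cast hf
    rw [warp, warp]; linarith [hfx.2, hfy.1]
  · have hfr : Int.fract x < Int.fract y := by
      rw [Int.fract, Int.fract, hf]; linarith
    rw [warp, warp, hf]
    have := hm hfr
    linarith

lemma warp_addInt (x : ℝ) (k : ℤ) : warp ctrl (x + k) = warp ctrl x + k := by
  rw [warp, warp, Int.floor_add_intCast, Int.fract_add_intCast]
  push_cast; ring

lemma warp_inverse (hch : List.Chain' Rlt ctrl) (h0 : (0, 0) ∈ ctrl) (h1 : (1, 1) ∈ ctrl)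
    (x : ℝ) : warp (ctrl.map Prod.swap) (warp ctrl x) = x := by
  obtain ⟨hfl, hfr⟩ := warp_floor hch h0 h1 x
  show (⌊warp ctrl x⌋ : ℝ) + pwl (ctrl.map Prod.swap) (Int.fract (warp ctrl x)) = x
  rw [hfl, hfr, pwl_inverse ctrl hch]
  exact (Int.floor_add_fract x)

lemma chain'_swap (hch : List.Chain' Rlt ctrl) : List.Chain' Rlt (ctrl.map Prod.swap) := by
  rw [List.Chain', List.isChain_map]
  exact hch.imp (fun a b h => ⟨h.2, h.1⟩)

lemma mem_swap_of_mem {p : ℝ × ℝ} (hp : p ∈ ctrl) : p.swap ∈ ctrl.map Prod.swap :=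
  List.mem_map_of_mem hp

/-- Main value lemma: if the fractional parts are a control pair and floors agree,
the warp maps `w` to `w'`. -/
lemma warp_value (hch : List.Chain' Rlt ctrl) {w w' : ℝ}
    (hfl : ⌊w⌋ = ⌊w'⌋) (hmem : (Int.fract w, Int.fract w') ∈ ctrl) :
    warp ctrl w = w' := by
  rw [warp, pwl_value ctrl hch _ hmem, hfl]
  exact Int.floor_add_fract w'

end SecB2
end QTPM
namespace QTPM
namespace Signal
section SecC

variable {X : Type} (σ : Signal X)

lemma pref_zero' : σ.pref 0 = 0 := by simp [pref]

lemma pref_mono : Monotone σ.pref := by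
  intro i j hij
  unfold pref
  rw [show σ.entries.take i = (σ.entries.take j).take i by rw [List.take_take, min_eq_left hij]]
  have : ∀ (l : List ((X → ℝ) × ℝ)), (∀ e ∈ l, (0:ℝ) < e.2) →
      ∀ k, ((l.take k).map Prod.snd).sum ≤ (l.map Prod.snd).sum := by
    intro l hl k
    conv_rhs => rw [← List.take_append_drop k l]
    rw [List.map_append, List.sum_append]
    have : 0 ≤ ((l.drop k).map Prod.snd).sum := by
      apply List.sum_nonneg
      intro x hx
      rcases List.mem_map.mp hx with ⟨e, he, rfl⟩
      exact (hl e (List.mem_of_mem_drop he)).le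
    linarith
  exact this _ (fun e he => σ.pos e (List.mem_of_mem_take he)) i

lemma pref_succ {i : ℕ} (h : i < σ.len) :
    σ.pref (i+1) = σ.pref i + (σ.entries.getD i (dflt X)).2 := by
  have h' : i < σ.entries.length := h
  rw [List.getD_eq_getElem _ _ h']
  unfold pref
  rw [List.take_succ, List.getElem?_eq_getElem h', List.map_append, List.sum_append]
  simp

lemma entry_snd_pos {i : ℕ} (h : i < σ.len) : 0 < (σ.entries.getD i (dflt X)).2 := by
  rw [List.getD_eq_getElem _ _ h]
  exact σ.pos _ (List.getElem_mem h)

lemma pref_lt_pref {i j : ℕ} (hij : i < j) (hj : j ≤ σ.len) : σ.pref i < σ.pref j := by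
  have h1 : σ.pref i + (σ.entries.getD i (dflt X)).2 ≤ σ.pref j := by
    rw [← pref_succ σ (lt_of_lt_of_le hij hj)]
    exact pref_mono σ hij
  have := entry_snd_pos σ (lt_of_lt_of_le hij hj)
  linarith

lemma pref_eq_dur {i : ℕ} (h : σ.len ≤ i) : σ.pref i = σ.dur := by
  unfold pref dur
  rw [List.take_of_length_le h]

lemma pref_le_dur (i : ℕ) : σ.pref i ≤ σ.dur := by
  rcases le_or_gt σ.len i with h | h
  · exact (pref_eq_dur σ h).le
  · rw [← pref_eq_dur σ (le_refl σ.len)]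
    exact pref_mono σ h.le

lemma pref_nonneg (i : ℕ) : 0 ≤ σ.pref i := by
  rw [← pref_zero' σ]; exact pref_mono σ (Nat.zero_le i)

lemma dur_nonneg : 0 ≤ σ.dur := by
  rw [← pref_eq_dur σ (le_refl σ.len)]; exact pref_nonneg σ _

lemma len_pos_of_dur_pos (h : 0 < σ.dur) : 0 < σ.len := by
  rcases Nat.eq_zero_or_pos σ.len with h0 | h1
  · exfalso
    have hd : σ.pref 0 = σ.dur := pref_eq_dur σ (by rw [h0])
    rw [pref_zero'] at hd
    rw [← hd] at h
    exact lt_irrefl 0 h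
  · exact h1

end SecC
end Signal
end QTPM
namespace QTPM
namespace Signal
section SecC2

variable {X : Type}

/-- The first segment index overlapping `[t,t')`. -/
noncomputable def ra (σ : Signal X) (t : ℝ) : ℕ :=
  if h : ∃ i, t < σ.pref (i+1) then Nat.find h else 0

/-- One past the last segment index overlapping `[t,t')`. -/
noncomputable def rb (σ : Signal X) (t' : ℝ) : ℕ :=
  if h : ∃ i, t' ≤ σ.pref i then Nat.find h else 0

set_option linter.unusedSectionVars false
variable (σ : Signal X) (t t' : ℝ)
variable (hd0 : 0 ≤ t) (hlt : t < t') (hdur : t' ≤ σ.dur)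

section withHyp
include hd0 hlt hdur

lemma ra_ex : ∃ i, t < σ.pref (i+1) :=
  ⟨σ.len, by rw [pref_eq_dur σ (Nat.le_succ _)]; linarith⟩

lemma rb_ex : ∃ i, t' ≤ σ.pref i :=
  ⟨σ.len, by rw [pref_eq_dur σ (le_refl _)]; linarith⟩

lemma ra_spec : t < σ.pref (ra σ t + 1) := by
  have hx := ra_ex σ t t' hd0 hlt hdur
  rw [ra, dif_pos hx]
  exact Nat.find_spec hx

lemma ra_min' {i : ℕ} (h : t < σ.pref (i+1)) : ra σ t ≤ i := by
  have hx := ra_ex σ t t' hd0 hlt hdur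
  rw [ra, dif_pos hx]
  exact Nat.find_min' hx h

lemma ra_le : σ.pref (ra σ t) ≤ t := by
  rcases Nat.eq_zero_or_pos (ra σ t) with h0 | h1
  · rw [h0, pref_zero']; exact hd0
  · by_contra hc
    push_neg at hc
    have h2 : t < σ.pref ((ra σ t - 1) + 1) := by
      rwa [Nat.sub_add_cancel h1]
    have := ra_min' σ t t' hd0 hlt hdur h2
    omega
  
lemma rb_spec : t' ≤ σ.pref (rb σ t') := by
  have hx := rb_ex σ t t' hd0 hlt hdur
  rw [rb, dif_pos hx]
  exact Nat.find_spec hx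

lemma rb_min {i : ℕ} (h : i < rb σ t') : σ.pref i < t' := by
  have hx := rb_ex σ t t' hd0 hlt hdur
  rw [rb, dif_pos hx] at h
  exact lt_of_not_ge (Nat.find_min hx h)

lemma rb_min' {i : ℕ} (h : t' ≤ σ.pref i) : rb σ t' ≤ i := by
  have hx := rb_ex σ t t' hd0 hlt hdur
  rw [rb, dif_pos hx]
  exact Nat.find_min' hx h

lemma rb_le_len : rb σ t' ≤ σ.len := by
  have hx := rb_ex σ t t' hd0 hlt hdur
  rw [rb, dif_pos hx]
  exact Nat.find_min' hx (by rw [pref_eq_dur σ (le_refl _)]; exact hdur)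

lemma ra_lt_rb : ra σ t < rb σ t' := by
  by_contra hc
  push_neg at hc
  have h1 : t' ≤ σ.pref (rb σ t') := rb_spec σ t t' hd0 hlt hdur
  have h2 : σ.pref (rb σ t') ≤ σ.pref (ra σ t) := pref_mono σ hc
  have h3 : σ.pref (ra σ t) ≤ t := ra_le σ t t' hd0 hlt hdur
  linarith

lemma cond_iff {i : ℕ} (hi : i < σ.len) :
    (σ.pref i < t' ∧ t < σ.pref (i+1)) ↔ (ra σ t ≤ i ∧ i < rb σ t') := by
  constructor
  · rintro ⟨h1, h2⟩
    refine ⟨ra_min' σ t t' hd0 hlt hdur h2, ?_⟩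
    by_contra hc
    push_neg at hc
    have := pref_mono σ hc
    have := rb_spec σ t t' hd0 hlt hdur
    linarith
  · rintro ⟨h1, h2⟩
    refine ⟨rb_min σ t t' hd0 hlt hdur h2, ?_⟩
    have : σ.pref (ra σ t + 1) ≤ σ.pref (i+1) := pref_mono σ (by omega)
    have := ra_spec σ t t' hd0 hlt hdur
    linarith

end withHyp
end SecC2
end Signal
end QTPM
namespace QTPM
namespace Signal
section SecC3
set_option linter.unusedSectionVars false

lemma filterMap_eq_map_filter {α β : Type*} (f : α → Option β) (g : α → β) (p : α → Bool)
    (l : List α) (h : ∀ a ∈ l, f a = if p a then some (g a) else none) :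
    l.filterMap f = (l.filter p).map g := by
  induction l with
  | nil => simp
  | cons a l ih =>
    rw [List.filterMap_cons, List.filter_cons]
    have ha := h a List.mem_cons_self
    by_cases hp : p a
    · rw [ha, if_pos hp, if_pos hp, List.map_cons, ih (fun x hx => h x (List.mem_cons_of_mem a hx))]
    · rw [ha, if_neg hp, if_neg hp, ih (fun x hx => h x (List.mem_cons_of_mem a hx))]

variable {X : Type} (σ : Signal X) (t t' : ℝ)
variable (hd0 : 0 ≤ t) (hlt : t < t') (hdur : t' ≤ σ.dur)

/-- The entry associated to the original segment `i` in the restriction. -/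
noncomputable def rent (i : ℕ) : (X → ℝ) × ℝ :=
  (σ.val i, min (σ.pref (i+1)) t' - max (σ.pref i) t)

include hd0 hlt hdur

lemma restrict_entries :
    (σ.restrict t t').entries =
      (List.range' (ra σ t) (rb σ t' - ra σ t)).map (rent σ t t') := by
  have hb_le := rb_le_len σ t t' hd0 hlt hdur
  have hab := ra_lt_rb σ t t' hd0 hlt hdur
  show (List.range σ.len).filterMap _ = _
  rw [filterMap_eq_map_filter _ (rent σ t t')
      (fun i => decide (ra σ t ≤ i ∧ i < rb σ t'))]
  · congr 1
    apply fun hp h1 h2 => List.Perm.eq_of_pairwise' (r := (· ≤ · : ℕ → ℕ → Prop)) h1 h2 hp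
    · rw [List.perm_ext_iff_of_nodup]
      · intro x
        rw [List.mem_filter, List.mem_range, List.mem_range'_1]
        constructor
        · rintro ⟨_, hx2⟩
          have := of_decide_eq_true hx2
          omega
        · rintro ⟨h1, h2⟩
          have h2' : x < rb σ t' := by omega
          exact ⟨by omega, decide_eq_true (by omega)⟩
      · exact ((List.pairwise_lt_range (n := _)).filter _).imp (fun h => Nat.ne_of_lt h)
      · exact (List.nodup_range')
    · exact (((List.pairwise_lt_range (n := _)).filter _).imp le_of_lt)
    · exact ((List.pairwise_lt_range').imp le_of_lt)
  · intro i hi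
    rw [List.mem_range] at hi
    have hstrict : σ.pref i < σ.pref (i+1) := pref_lt_pref σ (Nat.lt_succ_self i) hi
    by_cases hc : max (σ.pref i) t < min (σ.pref (i+1)) t'
    · rw [dif_pos hc, if_pos]
      · rfl
      · apply decide_eq_true
        simp only [max_lt_iff, lt_min_iff] at hc
        exact ((cond_iff σ t t' hd0 hlt hdur hi).mp ⟨hc.2.1, hc.1.2⟩)
    · rw [dif_neg hc, if_neg]
      intro hdec
      have hd := of_decide_eq_true hdec
      have hcnd := (cond_iff σ t t' hd0 hlt hdur hi).mpr hd
      exact absurd (by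
        simp only [max_lt_iff, lt_min_iff]
        exact ⟨⟨hstrict, hcnd.2⟩, hcnd.1, hlt⟩) hc

lemma restrict_len : (σ.restrict t t').len = rb σ t' - ra σ t := by
  rw [len, restrict_entries σ t t' hd0 hlt hdur]
  simp

lemma restrict_getD {j : ℕ} (hj : j < rb σ t' - ra σ t) :
    (σ.restrict t t').entries.getD j (dflt X) = rent σ t t' (ra σ t + j) := by
  rw [restrict_entries σ t t' hd0 hlt hdur]
  have h1 : j < ((List.range' (ra σ t) (rb σ t' - ra σ t)).map (rent σ t t')).length := by
    simpa using hj
  rw [List.getD_eq_getElem _ _ h1, List.getElem_map, List.getElem_range']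
  simp

lemma restrict_val {j : ℕ} (hj : j < rb σ t' - ra σ t) :
    (σ.restrict t t').val j = σ.val (ra σ t + j) := by
  rw [val, restrict_getD σ t t' hd0 hlt hdur hj]
  rfl

lemma restrict_pref_min {j : ℕ} (hj1 : 1 ≤ j) (hj : j ≤ rb σ t' - ra σ t) :
    (σ.restrict t t').pref j = min (σ.pref (ra σ t + j)) t' - t := by
  have hb_le := rb_le_len σ t t' hd0 hlt hdur
  have hab := ra_lt_rb σ t t' hd0 hlt hdur
  have hlen := restrict_len σ t t' hd0 hlt hdur
  have hra_le := ra_le σ t t' hd0 hlt hdur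
  have hra_spec := ra_spec σ t t' hd0 hlt hdur
  induction j with
  | zero => omega
  | succ j ih =>
    have hjlt : j < (σ.restrict t t').len := by omega
    rw [pref_succ _ hjlt, restrict_getD σ t t' hd0 hlt hdur (by omega)]
    rcases Nat.eq_zero_or_pos j with h0 | h1
    · subst h0
      have hmax : max (σ.pref (ra σ t)) t = t := max_eq_right hra_le
      simp only [Nat.add_zero, Nat.zero_add, pref_zero', rent, hmax]
      ring_nf
    · have hih := ih (by omega) (by omega)
      rw [hih, rent]
      have hminj : min (σ.pref (ra σ t + j)) t' = σ.pref (ra σ t + j) := by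
        apply min_eq_left
        exact (rb_min σ t t' hd0 hlt hdur (by omega)).le
      have hmaxj : max (σ.pref (ra σ t + j)) t = σ.pref (ra σ t + j) := by
        apply max_eq_left
        calc t ≤ σ.pref (ra σ t + 1) := hra_spec.le
          _ ≤ σ.pref (ra σ t + j) := pref_mono σ (by omega)
      rw [hminj, hmaxj]
      have : ra σ t + (j + 1) = ra σ t + j + 1 := by omega
      rw [this]
      ring

lemma restrict_pref_mid {j : ℕ} (hj1 : 1 ≤ j) (hj : j < rb σ t' - ra σ t) :
    (σ.restrict t t').pref j = σ.pref (ra σ t + j) - t := by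
  rw [restrict_pref_min σ t t' hd0 hlt hdur hj1 hj.le, min_eq_left]
  exact (rb_min σ t t' hd0 hlt hdur (by omega)).le

lemma restrict_pref_last :
    (σ.restrict t t').pref (rb σ t' - ra σ t) = t' - t := by
  have hab := ra_lt_rb σ t t' hd0 hlt hdur
  have hix : ra σ t + (rb σ t' - ra σ t) = rb σ t' := by omega
  rw [restrict_pref_min σ t t' hd0 hlt hdur (by omega) (le_refl _), hix,
    min_eq_right (rb_spec σ t t' hd0 hlt hdur)]

lemma restrict_dur : (σ.restrict t t').dur = t' - t := by
  rw [← pref_eq_dur _ (le_of_eq (restrict_len σ t t' hd0 hlt hdur)),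
    restrict_pref_last σ t t' hd0 hlt hdur]

end SecC3
end Signal
end QTPM
namespace QTPM
section SecD
set_option linter.unusedSectionVars false

variable {X L C S : Type} [CSemiring S] [CompleteCSemiring S]

/-- The state warp of the WTTS induced by a time warp `φ`. -/
noncomputable def stMap (φ : ℝ → ℝ) (q : WState X L C) : WState X L C :=
  (q.1, fun c => φ q.2.2.1 - φ (q.2.2.1 - q.2.1 c), φ q.2.2.1, q.2.2.2)

lemma stMap_fst (φ : ℝ → ℝ) (q : WState X L C) : (stMap φ q).1 = q.1 := rfl
lemma stMap_trace (φ : ℝ → ℝ) (q : WState X L C) : (stMap φ q).2.2.2 = q.2.2.2 := rfl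

section warpProps

variable {φ χ : ℝ → ℝ} (hmono : StrictMono φ)
  (hint : ∀ (x : ℝ) (k : ℤ), φ (x + k) = φ x + k)

include hmono hint

lemma warp_sub_lt (x y : ℝ) (k : ℤ) : φ y - φ x < k ↔ y - x < k := by
  rw [sub_lt_iff_lt_add, sub_lt_iff_lt_add, add_comm ((k:ℝ)) (φ x), ← hint x k,
    hmono.lt_iff_lt, add_comm x (k:ℝ)]

lemma warp_sub_le (x y : ℝ) (k : ℤ) : φ y - φ x ≤ k ↔ y - x ≤ k := by
  rw [sub_le_iff_le_add, sub_le_iff_le_add, add_comm ((k:ℝ)) (φ x), ← hint x k,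
    hmono.le_iff_le, add_comm x (k:ℝ)]

lemma eval_warp (op : CmpOp) (x y : ℝ) (d : ℕ) :
    op.eval (φ y - φ x) d ↔ op.eval (y - x) d := by
  have hcast : ((d:ℕ):ℝ) = ((d:ℤ):ℝ) := by push_cast; ring
  cases op with
  | lt => show _ < _ ↔ _ < _; rw [hcast]; exact warp_sub_lt hmono hint x y d
  | le => show _ ≤ _ ↔ _ ≤ _; rw [hcast]; exact warp_sub_le hmono hint x y d
  | gt =>
    show (d:ℝ) < _ ↔ (d:ℝ) < _
    rw [← not_le, ← not_le, hcast]
    exact not_congr (warp_sub_le hmono hint x y d)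
  | ge =>
    show (d:ℝ) ≤ _ ↔ (d:ℝ) ≤ _
    rw [← not_lt, ← not_lt, hcast]
    exact not_congr (warp_sub_lt hmono hint x y d)

end warpProps

section transfer

variable (W : TSWA X L C S) (ς₁ ς₂ : Signal X) (φ : ℝ → ℝ)
  (hmono : StrictMono φ)
  (hint : ∀ (x : ℝ) (k : ℤ), φ (x + k) = φ x + k)
  (hzero : φ 0 = 0)
  (hlen : ς₁.len = ς₂.len)
  (hval : ∀ j < ς₁.len, ς₁.val j = ς₂.val j)
  (hpref : ∀ j ≤ ς₁.len, φ (ς₁.pref j) = ς₂.pref j)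

include hmono hint hzero hlen hval hpref

lemma warp_dur : φ ς₁.dur = ς₂.dur := by
  rw [← Signal.pref_eq_dur ς₁ (le_refl _), ← Signal.pref_eq_dur ς₂ (le_of_eq hlen.symm)]
  exact hpref ς₁.len (le_refl _)

lemma valuesOn_transfer (x y : ℝ) : ς₂.valuesOn (φ x) (φ y) = ς₁.valuesOn x y := by
  unfold Signal.valuesOn
  congr 1
  rw [← hlen]
  have hfil : (List.range ς₁.len).filter
        (fun i => decide (ς₂.pref i < φ y ∧ φ x < ς₂.pref (i+1))) =
      (List.range ς₁.len).filter
        (fun i => decide (ς₁.pref i < y ∧ x < ς₁.pref (i+1))) := by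
    apply List.filter_congr
    intro i hi
    rw [List.mem_range] at hi
    rw [decide_eq_decide]
    rw [← hpref i hi.le, ← hpref (i+1) hi, hmono.lt_iff_lt, hmono.lt_iff_lt]
  rw [hfil]
  apply List.map_congr_left
  intro i hi
  rw [List.mem_filter, List.mem_range] at hi
  exact (hval i hi.1).symm

lemma wttsQ_transfer {q : WState X L C} (hq : q ∈ wttsQ ς₁) :
    stMap φ q ∈ wttsQ ς₂ := by
  obtain ⟨h1, h2, h3, h4⟩ := hq
  refine ⟨?_, ?_, ?_, h4⟩
  · intro c
    show 0 ≤ φ q.2.2.1 - φ (q.2.2.1 - q.2.1 c)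
    rw [sub_nonneg, hmono.le_iff_le]
    linarith [h1 c]
  · show 0 ≤ φ q.2.2.1
    rw [← hzero, hmono.le_iff_le]
    exact h2
  · show φ q.2.2.1 ≤ ς₂.dur
    rw [← warp_dur ς₁ ς₂ φ hmono hint hzero hlen hval hpref, hmono.le_iff_le]
    exact h3

lemma step_transfer {q q' : WState X L C} (h : wttsStep ς₁ W.toTSA q q') :
    wttsStep ς₂ W.toTSA (stMap φ q) (stMap φ q') := by
  obtain ⟨hq, hq', hstep⟩ := h
  refine ⟨wttsQ_transfer ς₁ ς₂ φ hmono hint hzero hlen hval hpref hq,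
    wttsQ_transfer ς₁ ς₂ φ hmono hint hzero hlen hval hpref hq', ?_⟩
  rcases hstep with ⟨g, ρ, hΔ, hg, hreset, htime, hne, hemp⟩ | ⟨hloc, τ, hτ, hcl, htt, haa⟩
  · left
    refine ⟨g, ρ, hΔ, ?_, ?_, ?_, hne, hemp⟩
    · intro p hp
      have := hg p hp
      show p.2.1.eval (φ q.2.2.1 - φ (q.2.2.1 - q.2.1 p.1)) p.2.2
      rw [eval_warp hmono hint]
      rwa [sub_sub_cancel]
    · show (fun c => φ q'.2.2.1 - φ (q'.2.2.1 - q'.2.1 c)) = _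
      funext c
      rw [htime, hreset]
      unfold resetVal
      by_cases hc : c ∈ ρ
      · simp only [if_pos hc, sub_zero, sub_self]
      · simp only [if_neg hc]
        rfl
    · show φ q'.2.2.1 = φ q.2.2.1
      rw [htime]
  · right
    refine ⟨hloc ▸ rfl, φ (q.2.2.1 + τ) - φ q.2.2.1, ?_, ?_, ?_, ?_⟩
    · rw [sub_pos]
      exact hmono (by linarith)
    · funext c
      show φ q'.2.2.1 - φ (q'.2.2.1 - q'.2.1 c) = _
      rw [htt, hcl]
      have harg : q.2.2.1 + τ - (q.2.1 c + τ) = q.2.2.1 - q.2.1 c := by ring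
      rw [harg]
      show _ = φ q.2.2.1 - φ (q.2.2.1 - q.2.1 c) + (φ (q.2.2.1 + τ) - φ q.2.2.1)
      ring
    · show φ q'.2.2.1 = φ q.2.2.1 + (φ (q.2.2.1 + τ) - φ q.2.2.1)
      rw [htt]; ring
    · show q'.2.2.2 = absCat q.2.2.2
        (ς₂.valuesOn (φ q.2.2.1) (φ q.2.2.1 + (φ (q.2.2.1 + τ) - φ q.2.2.1)))
      have harg : φ q.2.2.1 + (φ (q.2.2.1 + τ) - φ q.2.2.1) = φ (q.2.2.1 + τ) := by ring
      rw [harg, valuesOn_transfer ς₁ ς₂ φ hmono hint hzero hlen hval hpref, haa]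

end transfer

lemma weight_stMap (W : TSWA X L C S) (φ : ℝ → ℝ) (q q' : WState X L C) :
    wttsWeight W (stMap φ q) (stMap φ q') = wttsWeight W q q' := rfl

lemma pathVal_stMap (W : TSWA X L C S) (φ : ℝ → ℝ) :
    ∀ π : List (WState X L C),
      pathVal (wttsWeight W) (π.map (stMap φ)) = pathVal (wttsWeight W) π
  | [] => rfl
  | [q] => rfl
  | q :: q' :: r => by
    show CSemiring.mul (wttsWeight W (stMap φ q) (stMap φ q')) _ = _
    rw [weight_stMap]
    have := pathVal_stMap W φ (q' :: r)
    rw [List.map_cons] at this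
    show CSemiring.mul _ (pathVal (wttsWeight W) (stMap φ q' :: r.map (stMap φ))) = _
    rw [this]
    rfl

end SecD
end QTPM
namespace QTPM
section SecD2
set_option linter.unusedSectionVars false

variable {X L C S : Type} [CSemiring S] [CompleteCSemiring S]

section oneside
variable (W : TSWA X L C S) (ς₁ ς₂ : Signal X) (φ : ℝ → ℝ)
  (hmono : StrictMono φ)
  (hint : ∀ (x : ℝ) (k : ℤ), φ (x + k) = φ x + k)
  (hzero : φ 0 = 0)
  (hlen : ς₁.len = ς₂.len)
  (hval : ∀ j < ς₁.len, ς₁.val j = ς₂.val j)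
  (hpref : ∀ j ≤ ς₁.len, φ (ς₁.pref j) = ς₂.pref j)

include hmono hint hzero hlen hval hpref

lemma mem_paths_transfer {π : List (WState X L C)}
    (h : π ∈ PathsBetween (wttsStep ς₁ W.toTSA) (wttsQ0 W.toTSA) (wttsQF ς₁ W.toTSA)) :
    π.map (stMap φ) ∈
      PathsBetween (wttsStep ς₂ W.toTSA) (wttsQ0 W.toTSA) (wttsQF ς₂ W.toTSA) := by
  obtain ⟨hpath, ⟨a, ha, hh⟩, ⟨b, hb, hl⟩⟩ := h
  refine ⟨?_, ⟨stMap φ a, ?_, ?_⟩, ⟨stMap φ b, ?_, ?_⟩⟩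
  · rw [IsPath, List.Chain', List.isChain_map]
    exact hpath.imp (fun a b hab =>
      step_transfer W ς₁ ς₂ φ hmono hint hzero hlen hval hpref hab)
  · obtain ⟨ha1, ha2, ha3, ha4⟩ := ha
    refine ⟨ha1, ?_, ?_, ha4⟩
    · funext c
      show φ a.2.2.1 - φ (a.2.2.1 - a.2.1 c) = 0
      rw [ha3, congrFun ha2 c, sub_zero, sub_self]
    · show φ a.2.2.1 = 0
      rw [ha3, hzero]
  · rw [List.head?_map, hh]; rfl
  · obtain ⟨hb1, hb2, hb3, hb4⟩ := hb
    refine ⟨hb1, ?_, ?_, hb4⟩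
    · intro c
      show 0 ≤ φ b.2.2.1 - φ (b.2.2.1 - b.2.1 c)
      rw [sub_nonneg, hmono.le_iff_le]
      linarith [hb2 c]
    · show φ b.2.2.1 = ς₂.dur
      rw [hb3, warp_dur ς₁ ς₂ φ hmono hint hzero hlen hval hpref]
  · rw [List.getLast?_map, hl]; rfl

end oneside

lemma stMap_comp_id {φ χ : ℝ → ℝ} (hχφ : ∀ x, χ (φ x) = x) (q : WState X L C) :
    stMap χ (stMap φ q) = q := by
  unfold stMap
  refine Prod.ext rfl (Prod.ext ?_ (Prod.ext ?_ rfl))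
  · show (fun c => χ (φ q.2.2.1) - χ (φ q.2.2.1 - (φ q.2.2.1 - φ (q.2.2.1 - q.2.1 c)))) = q.2.1
    funext c
    have h1 : φ q.2.2.1 - (φ q.2.2.1 - φ (q.2.2.1 - q.2.1 c)) = φ (q.2.2.1 - q.2.1 c) := by
      ring
    rw [h1, hχφ, hχφ, sub_sub_cancel]
  · show χ (φ q.2.2.1) = q.2.2.1
    rw [hχφ]

theorem traceValue_transfer (W : TSWA X L C S) (ς₁ ς₂ : Signal X) (φ χ : ℝ → ℝ)
    (hmono : StrictMono φ)
    (hint : ∀ (x : ℝ) (k : ℤ), φ (x + k) = φ x + k)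
    (hχφ : ∀ x, χ (φ x) = x)
    (hφχ : ∀ y, φ (χ y) = y)
    (hzero : φ 0 = 0)
    (hlen : ς₁.len = ς₂.len)
    (hval : ∀ j < ς₁.len, ς₁.val j = ς₂.val j)
    (hpref : ∀ j ≤ ς₁.len, φ (ς₁.pref j) = ς₂.pref j) :
    traceValue ς₁ W = traceValue ς₂ W := by
  have hχmono : StrictMono χ := by
    intro x y hxy
    have := hmono.lt_iff_lt (a := χ x) (b := χ y)
    rw [hφχ, hφχ] at this
    exact this.mp hxy
  have hχint : ∀ (y : ℝ) (k : ℤ), χ (y + k) = χ y + k := by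
    intro y k
    apply hmono.injective
    rw [hφχ, hint, hφχ]
  have hχzero : χ 0 = 0 := by
    have := hχφ 0
    rwa [hzero] at this
  have hlen' : ς₂.len = ς₁.len := hlen.symm
  have hval' : ∀ j < ς₂.len, ς₂.val j = ς₁.val j := fun j hj =>
    (hval j (hlen ▸ hj)).symm
  have hpref' : ∀ j ≤ ς₂.len, χ (ς₂.pref j) = ς₁.pref j := by
    intro j hj
    rw [← hpref j (hlen ▸ hj), hχφ]
  -- the list-level equivalence
  have hlid : ∀ l : List (WState X L C), (l.map (stMap φ)).map (stMap χ) = l := by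
    intro l
    rw [List.map_map]
    have : (stMap χ ∘ stMap φ : WState X L C → WState X L C) = id := by
      funext q
      exact stMap_comp_id hχφ q
    rw [this, List.map_id]
  have hlid' : ∀ l : List (WState X L C), (l.map (stMap χ)).map (stMap φ) = l := by
    intro l
    rw [List.map_map]
    have : (stMap φ ∘ stMap χ : WState X L C → WState X L C) = id := by
      funext q
      exact stMap_comp_id hφχ q
    rw [this, List.map_id]
  set P₁ := PathsBetween (wttsStep ς₁ W.toTSA) (wttsQ0 W.toTSA) (wttsQF ς₁ W.toTSA) with hP₁
  set P₂ := PathsBetween (wttsStep ς₂ W.toTSA) (wttsQ0 W.toTSA) (wttsQF ς₂ W.toTSA) with hP₂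
  have hmem : ∀ l : List (WState X L C), l ∈ P₁ ↔ l.map (stMap φ) ∈ P₂ := by
    intro l
    constructor
    · exact fun h => mem_paths_transfer W ς₁ ς₂ φ hmono hint hzero hlen hval hpref h
    · intro h
      have := mem_paths_transfer W ς₂ ς₁ χ hχmono hχint hχzero hlen' hval' hpref' h
      rwa [hlid l] at this
  let E0 : List (WState X L C) ≃ List (WState X L C) :=
    ⟨List.map (stMap φ), List.map (stMap χ), hlid, hlid'⟩
  let E : ↥P₁ ≃ ↥P₂ := Equiv.subtypeEquiv E0 hmem
  show sDist _ _ _ _ = sDist _ _ _ _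
  unfold sDist
  rw [← iSum_equiv E (fun π : ↥P₂ => pathVal (wttsWeight W) π.1)]
  apply iSum_congr
  intro π
  show pathVal (wttsWeight W) π.1 = pathVal (wttsWeight W) (π.1.map (stMap φ))
  exact (pathVal_stMap W φ π.1).symm

end SecD2
end QTPM
namespace QTPM
section SecE1
set_option linter.unusedSectionVars false

instance : Fintype Ordering :=
  ⟨⟨{Ordering.lt, Ordering.eq, Ordering.gt}, by decide⟩, fun x => by cases x <;> decide⟩

/-- Value-membership is preserved by `destutter'` for `≠`. -/
lemma mem_destutter'_ne {α : Type*} [inst : DecidableRel (fun a b : α => a ≠ b)] :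
    ∀ (l : List α) (a x : α), x ∈ l → x ∈ List.destutter' (· ≠ ·) a l := by
  intro l
  induction l with
  | nil => intro a x hx; simp at hx
  | cons b l ih =>
    intro a x hx
    by_cases hab : a ≠ b
    · rw [List.destutter'_cons_pos _ hab]
      rcases List.mem_cons.mp hx with rfl | hx'
      · exact List.mem_cons_of_mem a (List.mem_destutter' l _ x)
      · exact List.mem_cons_of_mem a (ih b x hx')
    · push_neg at hab
      subst hab
      rw [List.destutter'_cons_neg _ (by simp)]
      rcases List.mem_cons.mp hx with rfl | hx'
      · exact List.mem_destutter' l _ x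
      · exact ih a x hx'

lemma mem_destutter_ne {α : Type*} [inst : DecidableRel (fun a b : α => a ≠ b)]
    (l : List α) (x : α) (hx : x ∈ l) :
    x ∈ List.destutter (· ≠ ·) l := by
  cases l with
  | nil => simp at hx
  | cons a l =>
    rw [List.destutter_cons']
    rcases List.mem_cons.mp hx with rfl | hx'
    · exact List.mem_destutter' l _ x
    · exact mem_destutter'_ne l a x hx'

/-- Upgrading a `≠`-chain that is sorted and order-consistent to a strict chain. -/
lemma chain'_rlt_of_props : ∀ (l : List (ℝ × ℝ)),
    List.Chain' (· ≠ ·) l →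
    List.Pairwise (fun p q : ℝ × ℝ => p.1 ≤ q.1) l →
    (∀ p ∈ l, ∀ q ∈ l, p.1 = q.1 → p.2 = q.2) →
    (∀ p ∈ l, ∀ q ∈ l, p.1 < q.1 → p.2 < q.2) →
    List.Chain' Rlt l
  | [], _, _, _, _ => List.isChain_nil
  | [p], _, _, _, _ => List.isChain_singleton p
  | p :: q :: l, hne, hle, hcons, hord => by
    rw [List.Chain', List.isChain_cons_cons]
    have hmp : p ∈ p :: q :: l := List.mem_cons_self
    have hmq : q ∈ p :: q :: l := List.mem_cons_of_mem _ (List.mem_cons_self)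
    have h1 : p.1 ≤ q.1 := (List.pairwise_cons.mp hle).1 q (List.mem_cons_self)
    have hpq : p ≠ q := (List.isChain_cons_cons.mp hne).1
    have h1' : p.1 < q.1 := by
      rcases lt_or_eq_of_le h1 with h | h
      · exact h
      · exact absurd (Prod.ext h (hcons p hmp q hmq h)) hpq
    refine ⟨⟨h1', hord p hmp q hmq h1'⟩, ?_⟩
    exact chain'_rlt_of_props (q :: l) (List.isChain_cons_cons.mp hne).2 (List.pairwise_cons.mp hle).2
      (fun x hx y hy => hcons x (List.mem_cons_of_mem _ hx) y (List.mem_cons_of_mem _ hy))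
      (fun x hx y hy => hord x (List.mem_cons_of_mem _ hx) y (List.mem_cons_of_mem _ hy))

/-- Atom semantics, matching the body of `IsZone`. -/
def atomSem {C' : Type} (a : (C' × CmpOp × ℝ) ⊕ (C' × C' × CmpOp × ℝ)) (ν : C' → ℝ) : Prop :=
  match a with
  | .inl p => p.2.1.eval (ν p.1) p.2.2
  | .inr p => p.2.2.1.eval (ν p.1 - ν p.2.1) p.2.2.2

lemma isZone_of_atoms {C' : Type} (l : List ((C' × CmpOp × ℝ) ⊕ (C' × C' × CmpOp × ℝ))) :
    IsZone {ν : C' → ℝ | ∀ a ∈ l, atomSem a ν} := ⟨l, rfl⟩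

lemma isZone_inter {C' : Type} {Z1 Z2 : Set (C' → ℝ)} (h1 : IsZone Z1) (h2 : IsZone Z2) :
    IsZone (Z1 ∩ Z2) := by
  obtain ⟨l1, rfl⟩ := h1
  obtain ⟨l2, rfl⟩ := h2
  refine ⟨l1 ++ l2, ?_⟩
  ext ν
  constructor
  · rintro ⟨ha, hb⟩ a hab
    rcases List.mem_append.mp hab with h | h
    · exact ha a h
    · exact hb a h
  · intro h
    exact ⟨fun a ha => h a (List.mem_append.mpr (Or.inl ha)),
      fun a ha => h a (List.mem_append.mpr (Or.inr ha))⟩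

lemma isZone_univ {C' : Type} : IsZone (Set.univ : Set (C' → ℝ)) := by
  refine ⟨[], ?_⟩
  ext ν
  simp

lemma isZone_biInter {C' ι : Type} (t : Finset ι) (F : ι → Set (C' → ℝ))
    (h : ∀ i, IsZone (F i)) : IsZone (⋂ i ∈ t, F i) := by
  classical
  induction t using Finset.induction_on with
  | empty => simpa using isZone_univ
  | insert a s hnotmem ih =>
    rw [Finset.set_biInter_insert]
    exact isZone_inter (h _) ih

end SecE1
end QTPM
namespace QTPM
section SecE2
set_option linter.unusedSectionVars false

variable {X : Type}

/-- Bound for the integer constants in cell atoms. -/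
noncomputable def Mzb (σ : Signal X) : ℤ := 2 * ⌈σ.dur⌉ + 2

/-- The (finite) type of integer constants for cell atoms. -/
abbrev ZT (σ : Signal X) : Type := ↥(Finset.Icc (-(Mzb σ)) (Mzb σ))

/-- The index type of cell atoms. -/
abbrev DIdx (σ : Signal X) : Type := Fin 3 × Fin (σ.len + 1) × ZT σ

/-- Cell signatures. -/
abbrev SigT (σ : Signal X) : Type := DIdx σ → Ordering

/-- The left-hand sides of the cell atoms. -/
noncomputable def base (k : Fin 3) (ν : Bool → ℝ) : ℝ :=
  if k.val = 0 then ν true else if k.val = 1 then ν false else ν false - ν true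

/-- The right-hand sides (thresholds) of the cell atoms. -/
noncomputable def thr (σ : Signal X) (d : DIdx σ) : ℝ :=
  if d.1.val = 2 then ((d.2.2.1 : ℤ) : ℝ) else σ.pref d.2.1.val - ((d.2.2.1 : ℤ) : ℝ)

/-- The cell signature of a point. -/
noncomputable def sigFun (σ : Signal X) (ν : Bool → ℝ) : SigT σ :=
  fun d => cmp (base d.1 ν) (thr σ d)

/-- The domain `{(t,t') | 0 ≤ t < t' ≤ |σ|}`. -/
def domSet (σ : Signal X) : Set (Bool → ℝ) :=
  {ν | 0 ≤ ν true ∧ ν true < ν false ∧ ν false ≤ σ.dur}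

/-- The cell of signature `s`. -/
noncomputable def Zcell (σ : Signal X) (s : SigT σ) : Set (Bool → ℝ) :=
  {ν | ν ∈ domSet σ ∧ sigFun σ ν = s}

lemma isZone_atom1 (b : Bool) (op : CmpOp) (d : ℝ) :
    IsZone {ν : Bool → ℝ | op.eval (ν b) d} := by
  refine ⟨[Sum.inl (b, op, d)], ?_⟩
  ext ν
  constructor
  · intro h a ha
    rcases List.mem_singleton.mp ha with rfl
    exact h
  · intro h
    exact h _ (List.mem_singleton_self _)

lemma isZone_atom2 (b b' : Bool) (op : CmpOp) (d : ℝ) :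
    IsZone {ν : Bool → ℝ | op.eval (ν b - ν b') d} := by
  refine ⟨[Sum.inr (b, b', op, d)], ?_⟩
  ext ν
  constructor
  · intro h a ha
    rcases List.mem_singleton.mp ha with rfl
    exact h
  · intro h
    exact h _ (List.mem_singleton_self _)

lemma isZone_eq1 (b : Bool) (d : ℝ) : IsZone {ν : Bool → ℝ | ν b = d} := by
  have h : {ν : Bool → ℝ | ν b = d} =
      {ν : Bool → ℝ | CmpOp.le.eval (ν b) d} ∩ {ν : Bool → ℝ | CmpOp.ge.eval (ν b) d} := by
    ext ν
    simp only [Set.mem_setOf_eq, Set.mem_inter_iff, CmpOp.eval]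
    constructor
    · rintro rfl; exact ⟨le_refl _, le_refl _⟩
    · rintro ⟨h1, h2⟩; exact le_antisymm h1 h2
  rw [h]
  exact isZone_inter (isZone_atom1 b .le d) (isZone_atom1 b .ge d)

lemma isZone_eq2 (b b' : Bool) (d : ℝ) : IsZone {ν : Bool → ℝ | ν b - ν b' = d} := by
  have h : {ν : Bool → ℝ | ν b - ν b' = d} =
      {ν : Bool → ℝ | CmpOp.le.eval (ν b - ν b') d} ∩
        {ν : Bool → ℝ | CmpOp.ge.eval (ν b - ν b') d} := by
    ext ν
    simp only [Set.mem_setOf_eq, Set.mem_inter_iff, CmpOp.eval]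
    constructor
    · rintro rfl; exact ⟨le_refl _, le_refl _⟩
    · rintro ⟨h1, h2⟩; exact le_antisymm h1 h2
  rw [h]
  exact isZone_inter (isZone_atom2 b b' .le d) (isZone_atom2 b b' .ge d)

lemma isZone_cmpSet (k : Fin 3) (d : ℝ) (o : Ordering) :
    IsZone {ν : Bool → ℝ | cmp (base k ν) d = o} := by
  have hsplit : k.val = 0 ∨ k.val = 1 ∨ ¬(k.val = 0 ∨ k.val = 1) := by omega
  have hbase : (∀ ν : Bool → ℝ, base k ν = ν true) ∨
      (∀ ν : Bool → ℝ, base k ν = ν false) ∨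
      (∀ ν : Bool → ℝ, base k ν = ν false - ν true) := by
    rcases hsplit with h | h | h
    · left; intro ν; rw [base, if_pos h]
    · right; left; intro ν; rw [base, if_neg (by omega), if_pos h]
    · right; right; intro ν
      push_neg at h
      rw [base, if_neg h.1, if_neg h.2]
  rcases hbase with h | h | h
  · rcases o with _ | _ | _
    · have : {ν : Bool → ℝ | cmp (base k ν) d = Ordering.lt} =
          {ν : Bool → ℝ | CmpOp.lt.eval (ν true) d} := by
        ext ν; rw [Set.mem_setOf_eq, Set.mem_setOf_eq, h ν, cmp_eq_lt_iff]; rfl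
      rw [this]; exact isZone_atom1 _ _ _
    · have : {ν : Bool → ℝ | cmp (base k ν) d = Ordering.eq} =
          {ν : Bool → ℝ | ν true = d} := by
        ext ν; rw [Set.mem_setOf_eq, Set.mem_setOf_eq, h ν, cmp_eq_eq_iff]
      rw [this]; exact isZone_eq1 _ _
    · have : {ν : Bool → ℝ | cmp (base k ν) d = Ordering.gt} =
          {ν : Bool → ℝ | CmpOp.gt.eval (ν true) d} := by
        ext ν; rw [Set.mem_setOf_eq, Set.mem_setOf_eq, h ν, cmp_eq_gt_iff]; rfl
      rw [this]; exact isZone_atom1 _ _ _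
  · rcases o with _ | _ | _
    · have : {ν : Bool → ℝ | cmp (base k ν) d = Ordering.lt} =
          {ν : Bool → ℝ | CmpOp.lt.eval (ν false) d} := by
        ext ν; rw [Set.mem_setOf_eq, Set.mem_setOf_eq, h ν, cmp_eq_lt_iff]; rfl
      rw [this]; exact isZone_atom1 _ _ _
    · have : {ν : Bool → ℝ | cmp (base k ν) d = Ordering.eq} =
          {ν : Bool → ℝ | ν false = d} := by
        ext ν; rw [Set.mem_setOf_eq, Set.mem_setOf_eq, h ν, cmp_eq_eq_iff]
      rw [this]; exact isZone_eq1 _ _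
    · have : {ν : Bool → ℝ | cmp (base k ν) d = Ordering.gt} =
          {ν : Bool → ℝ | CmpOp.gt.eval (ν false) d} := by
        ext ν; rw [Set.mem_setOf_eq, Set.mem_setOf_eq, h ν, cmp_eq_gt_iff]; rfl
      rw [this]; exact isZone_atom1 _ _ _
  · rcases o with _ | _ | _
    · have : {ν : Bool → ℝ | cmp (base k ν) d = Ordering.lt} =
          {ν : Bool → ℝ | CmpOp.lt.eval (ν false - ν true) d} := by
        ext ν; rw [Set.mem_setOf_eq, Set.mem_setOf_eq, h ν, cmp_eq_lt_iff]; rfl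
      rw [this]; exact isZone_atom2 _ _ _ _
    · have : {ν : Bool → ℝ | cmp (base k ν) d = Ordering.eq} =
          {ν : Bool → ℝ | ν false - ν true = d} := by
        ext ν; rw [Set.mem_setOf_eq, Set.mem_setOf_eq, h ν, cmp_eq_eq_iff]
      rw [this]; exact isZone_eq2 _ _ _
    · have : {ν : Bool → ℝ | cmp (base k ν) d = Ordering.gt} =
          {ν : Bool → ℝ | CmpOp.gt.eval (ν false - ν true) d} := by
        ext ν; rw [Set.mem_setOf_eq, Set.mem_setOf_eq, h ν, cmp_eq_gt_iff]; rfl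
      rw [this]; exact isZone_atom2 _ _ _ _

lemma isZone_domSet (σ : Signal X) : IsZone (domSet σ) := by
  have h : domSet σ = {ν : Bool → ℝ | CmpOp.ge.eval (ν true) 0} ∩
      ({ν : Bool → ℝ | CmpOp.lt.eval (ν true - ν false) 0} ∩
        {ν : Bool → ℝ | CmpOp.le.eval (ν false) σ.dur}) := by
    ext ν
    simp only [domSet, Set.mem_setOf_eq, Set.mem_inter_iff, CmpOp.eval]
    constructor
    · rintro ⟨h1, h2, h3⟩
      exact ⟨h1, by linarith, h3⟩
    · rintro ⟨h1, h2, h3⟩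
      exact ⟨h1, by linarith, h3⟩
  rw [h]
  exact isZone_inter (isZone_atom1 _ _ _)
    (isZone_inter (isZone_atom2 _ _ _ _) (isZone_atom1 _ _ _))

lemma isZone_Zcell (σ : Signal X) (s : SigT σ) : IsZone (Zcell σ s) := by
  have h : Zcell σ s = domSet σ ∩
      ⋂ d ∈ (Finset.univ : Finset (DIdx σ)), {ν : Bool → ℝ | cmp (base d.1 ν) (thr σ d) = s d} := by
    ext ν
    simp only [Zcell, Set.mem_setOf_eq, Set.mem_inter_iff, Set.mem_iInter, funext_iff,
      Finset.mem_univ, true_implies]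
    rfl
  rw [h]
  exact isZone_inter (isZone_domSet σ)
    (isZone_biInter _ _ (fun d => isZone_cmpSet d.1 (thr σ d) (s d)))

end SecE2
end QTPM
namespace QTPM
section SecE3
set_option linter.unusedSectionVars false

lemma cmp_iff_lt {x y d : ℝ} (h : cmp x d = cmp y d) : x < d ↔ y < d := by
  rw [← cmp_eq_lt_iff x d, ← cmp_eq_lt_iff y d, h]

lemma cmp_iff_le {x y d : ℝ} (h : cmp x d = cmp y d) : x ≤ d ↔ y ≤ d := by
  rw [← not_lt, ← not_lt]
  apply not_congr
  rw [← cmp_eq_gt_iff x d, ← cmp_eq_gt_iff y d, h]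

lemma cmp_iff_eq {x y d : ℝ} (h : cmp x d = cmp y d) : x = d ↔ y = d := by
  rw [← cmp_eq_eq_iff x d, ← cmp_eq_eq_iff y d, h]

lemma floor_eq_floor {A B : ℝ} (M : ℤ) (hbl : -M ≤ ⌊A⌋) (hbu : ⌊A⌋ + 1 ≤ M)
    (h : ∀ z : ℤ, |z| ≤ M → ((z:ℝ) ≤ A ↔ (z:ℝ) ≤ B)) : ⌊A⌋ = ⌊B⌋ := by
  have h1 : ((⌊A⌋:ℤ):ℝ) ≤ A := Int.floor_le A
  have h2 : A < (⌊A⌋:ℝ) + 1 := Int.lt_floor_add_one A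
  have hz : |⌊A⌋| ≤ M := by rw [abs_le]; omega
  have hz1 : |⌊A⌋ + 1| ≤ M := by rw [abs_le]; omega
  have hB1 : ((⌊A⌋:ℤ):ℝ) ≤ B := (h ⌊A⌋ hz).mp h1
  have hB2 : B < (⌊A⌋:ℝ) + 1 := by
    by_contra hc
    push_neg at hc
    have := (h (⌊A⌋+1) hz1).mpr (by push_cast; linarith)
    push_cast at this
    linarith
  exact (Int.floor_eq_iff.mpr ⟨hB1, by push_cast; exact hB2⟩).symm

/-- Bounds for floors of differences within `[0, D]`. -/
lemma floor_diff_bounds {x y D : ℝ} (hx : 0 ≤ x) (hxd : x ≤ D) (hy : 0 ≤ y) (hyd : y ≤ D) :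
    -⌈D⌉ ≤ ⌊x - y⌋ ∧ ⌊x - y⌋ ≤ ⌈D⌉ := by
  constructor
  · apply Int.le_floor.mpr
    push_cast
    have := Int.le_ceil D
    linarith
  · calc ⌊x - y⌋ ≤ ⌊D⌋ := Int.floor_le_floor (by linarith)
      _ ≤ ⌈D⌉ := Int.floor_le_ceil D

end SecE3
end QTPM
namespace QTPM
section SecE3b
set_option linter.unusedSectionVars false
set_option maxHeartbeats 2000000

open Signal

theorem constancy {X L C S : Type} [CSemiring S] [CompleteCSemiring S]
    (σ : Signal X) (W : TSWA X L C S) (t t' u u' : ℝ)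
    (ht0 : 0 ≤ t) (htt : t < t') (htd : t' ≤ σ.dur)
    (hu0 : 0 ≤ u) (huu : u < u') (hud : u' ≤ σ.dur)
    (HA : ∀ i ≤ σ.len, ∀ z : ℤ, |z| ≤ Mzb σ → cmp t (σ.pref i - z) = cmp u (σ.pref i - z))
    (HB : ∀ i ≤ σ.len, ∀ z : ℤ, |z| ≤ Mzb σ → cmp t' (σ.pref i - z) = cmp u' (σ.pref i - z))
    (HC : ∀ z : ℤ, |z| ≤ Mzb σ → cmp (t' - t) (z:ℝ) = cmp (u' - u) (z:ℝ)) :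
    traceValue (σ.restrict t t') W = traceValue (σ.restrict u u') W := by
  have hdur0 : (0:ℝ) ≤ σ.dur := Signal.dur_nonneg σ
  have hNc : (0:ℤ) ≤ ⌈σ.dur⌉ := Int.ceil_nonneg hdur0
  have hMz : Mzb σ = 2 * ⌈σ.dur⌉ + 2 := rfl
  have htdur : t ≤ σ.dur := by linarith
  have hudur : u ≤ σ.dur := by linarith
  have ht'0 : (0:ℝ) ≤ t' := by linarith
  have hu'0 : (0:ℝ) ≤ u' := by linarith
  -- floor equalities
  have key : ∀ i ≤ σ.len, ⌊σ.pref i - t⌋ = ⌊σ.pref i - u⌋ := by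
    intro i hi
    have hP0 := Signal.pref_nonneg σ i
    have hPd := Signal.pref_le_dur σ i
    obtain ⟨hb1, hb2⟩ := floor_diff_bounds hP0 hPd ht0 htdur
    apply floor_eq_floor (Mzb σ) (by omega) (by omega)
    intro z hz
    have hiff := cmp_iff_le (HA i hi z hz)
    constructor
    · intro h1
      have h2 : t ≤ σ.pref i - (z:ℝ) := by linarith
      have h3 := hiff.mp h2
      linarith
    · intro h1
      have h2 : u ≤ σ.pref i - (z:ℝ) := by linarith
      have h3 := hiff.mpr h2
      linarith
  have keyd : ⌊t' - t⌋ = ⌊u' - u⌋ := by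
    obtain ⟨hb1, hb2⟩ := floor_diff_bounds ht'0 htd ht0 htdur
    apply floor_eq_floor (Mzb σ) (by omega) (by omega)
    intro z hz
    have hiff := cmp_iff_lt (HC z hz)
    rw [← not_lt, ← not_lt]
    exact not_congr hiff
  -- window equality
  have hnat := Signal.ra_lt_rb σ t t' ht0 htt htd
  have hnau := Signal.ra_lt_rb σ u u' hu0 huu hud
  have hbnt := Signal.rb_le_len σ t t' ht0 htt htd
  have hbnu := Signal.rb_le_len σ u u' hu0 huu hud
  have h0M : |(0:ℤ)| ≤ Mzb σ := by rw [hMz]; simp; omega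
  have HA0 : ∀ i ≤ σ.len, cmp t (σ.pref i) = cmp u (σ.pref i) := by
    intro i hi
    have := HA i hi 0 h0M
    rwa [Int.cast_zero, sub_zero] at this
  have HB0 : ∀ i ≤ σ.len, cmp t' (σ.pref i) = cmp u' (σ.pref i) := by
    intro i hi
    have := HB i hi 0 h0M
    rwa [Int.cast_zero, sub_zero] at this
  have hra : Signal.ra σ u = Signal.ra σ t := by
    apply le_antisymm
    · apply Signal.ra_min' σ u u' hu0 huu hud
      exact (cmp_iff_lt (HA0 (Signal.ra σ t + 1) (by omega))).mp
        (Signal.ra_spec σ t t' ht0 htt htd)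
    · apply Signal.ra_min' σ t t' ht0 htt htd
      exact (cmp_iff_lt (HA0 (Signal.ra σ u + 1) (by omega))).mpr
        (Signal.ra_spec σ u u' hu0 huu hud)
  have hrb : Signal.rb σ u' = Signal.rb σ t' := by
    apply le_antisymm
    · apply Signal.rb_min' σ u u' hu0 huu hud
      exact (cmp_iff_le (HB0 (Signal.rb σ t') hbnt)).mp
        (Signal.rb_spec σ t t' ht0 htt htd)
    · apply Signal.rb_min' σ t t' ht0 htt htd
      exact (cmp_iff_le (HB0 (Signal.rb σ u') hbnu)).mpr
        (Signal.rb_spec σ u u' hu0 huu hud)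
  set a := Signal.ra σ t with haa
  set b := Signal.rb σ t' with hbb
  set m := b - a with hmm
  -- fractional parts
  set F : ℕ → ℝ := fun i => Int.fract (σ.pref i - t) with hF
  set G : ℕ → ℝ := fun i => Int.fract (σ.pref i - u) with hG
  set Fd := Int.fract (t' - t) with hFdd
  set Gd := Int.fract (u' - u) with hGdd
  have hFv : ∀ i, F i = (σ.pref i - t) - (⌊σ.pref i - t⌋ : ℝ) :=
    fun i => (Int.self_sub_floor _).symm
  have hGv : ∀ i, G i = (σ.pref i - u) - (⌊σ.pref i - u⌋ : ℝ) :=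
    fun i => (Int.self_sub_floor _).symm
  have hFdv : Fd = (t' - t) - (⌊t' - t⌋ : ℝ) := (Int.self_sub_floor _).symm
  have hGdv : Gd = (u' - u) - (⌊u' - u⌋ : ℝ) := (Int.self_sub_floor _).symm
  have hFG_diff : ∀ i ≤ σ.len, ∀ j ≤ σ.len, F i - F j = G i - G j := by
    intro i hi j hj
    rw [hFv, hFv, hGv, hGv, ← key i hi, ← key j hj]
    ring
  have hFG0 : ∀ i ≤ σ.len, (F i = 0 ↔ G i = 0) := by
    intro i hi
    have hP0 := Signal.pref_nonneg σ i
    have hPd := Signal.pref_le_dur σ i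
    obtain ⟨hb1, hb2⟩ := floor_diff_bounds hP0 hPd ht0 htdur
    have hzM : |⌊σ.pref i - t⌋| ≤ Mzb σ := by rw [abs_le, hMz]; omega
    have hiff := cmp_iff_eq (HA i hi ⌊σ.pref i - t⌋ hzM)
    rw [hFv, hGv, ← key i hi]
    constructor
    · intro h0
      have h1 : t = σ.pref i - (⌊σ.pref i - t⌋:ℝ) := by linarith
      have h2 := hiff.mp h1
      linarith
    · intro h0
      have h1 : u = σ.pref i - (⌊σ.pref i - t⌋:ℝ) := by linarith
      have h2 := hiff.mpr h1
      linarith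
  have hFd0 : Fd = 0 ↔ Gd = 0 := by
    obtain ⟨hb1, hb2⟩ := floor_diff_bounds ht'0 htd ht0 htdur
    have hzM : |⌊t' - t⌋| ≤ Mzb σ := by rw [abs_le, hMz]; omega
    have hiff := cmp_iff_eq (HC ⌊t' - t⌋ hzM)
    rw [hFdv, hGdv, ← keyd]
    constructor
    · intro h0
      have h1 : t' - t = (⌊t' - t⌋:ℝ) := by linarith
      have h2 := hiff.mp h1
      linarith
    · intro h0
      have h1 : u' - u = (⌊t' - t⌋:ℝ) := by linarith
      have h2 := hiff.mpr h1
      linarith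
  have hFdi : ∀ i ≤ σ.len, ((Fd < F i ↔ Gd < G i) ∧ (Fd = F i ↔ Gd = G i) ∧
      (F i < Fd ↔ G i < Gd)) := by
    intro i hi
    have hP0 := Signal.pref_nonneg σ i
    have hPd := Signal.pref_le_dur σ i
    obtain ⟨hc1, hc2⟩ := floor_diff_bounds hP0 hPd ht0 htdur
    obtain ⟨hd1, hd2⟩ := floor_diff_bounds ht'0 htd ht0 htdur
    have hd0 : (0:ℤ) ≤ ⌊t' - t⌋ := Int.floor_nonneg.mpr (by linarith)
    set z : ℤ := ⌊σ.pref i - t⌋ - ⌊t' - t⌋ with hzz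
    have hzM : |z| ≤ Mzb σ := by rw [abs_le, hMz]; omega
    have hlt := cmp_iff_lt (HB i hi z hzM)
    have hle := cmp_iff_le (HB i hi z hzM)
    have heq := cmp_iff_eq (HB i hi z hzM)
    have hzc : ((z:ℤ):ℝ) = (⌊σ.pref i - t⌋:ℝ) - (⌊t' - t⌋:ℝ) := by
      rw [hzz]; push_cast; ring
    have hFdiff : F i - Fd = (σ.pref i - (z:ℝ)) - t' := by
      rw [hFv, hFdv, hzc]; ring
    have hGdiff : G i - Gd = (σ.pref i - (z:ℝ)) - u' := by
      rw [hGv, hGdv, hzc, ← key i hi, ← keyd]; ring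
    refine ⟨?_, ?_, ?_⟩
    · constructor
      · intro h
        have h1 : t' < σ.pref i - (z:ℝ) := by linarith
        have h2 := hlt.mp h1
        linarith
      · intro h
        have h1 : u' < σ.pref i - (z:ℝ) := by linarith
        have h2 := hlt.mpr h1
        linarith
    · constructor
      · intro h
        have h1 : t' = σ.pref i - (z:ℝ) := by linarith
        have h2 := heq.mp h1
        linarith
      · intro h
        have h1 : u' = σ.pref i - (z:ℝ) := by linarith
        have h2 := heq.mpr h1
        linarith
    · constructor
      · intro h
        have h1 : ¬ (t' ≤ σ.pref i - (z:ℝ)) := by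
          push_neg
          linarith [hFdiff]
        have h2 : ¬ (u' ≤ σ.pref i - (z:ℝ)) := fun hc => h1 (hle.mpr hc)
        push_neg at h2
        linarith [hGdiff]
      · intro h
        have h1 : ¬ (u' ≤ σ.pref i - (z:ℝ)) := by
          push_neg
          linarith [hGdiff]
        have h2 : ¬ (t' ≤ σ.pref i - (z:ℝ)) := fun hc => h1 (hle.mp hc)
        push_neg at h2
        linarith [hFdiff]
  -- the control list
  have hab : a < b := hnat
  have hble : b ≤ σ.len := hbnt
  set srcs : List (ℝ × ℝ) :=
    ((0,0) :: (Fd, Gd) :: (List.range' (a+1) (m-1)).map (fun i => (F i, G i))) ++ [(1,1)]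
    with hsrcs
  have hmemchar : ∀ p ∈ srcs, p = ((0:ℝ),(0:ℝ)) ∨ p = ((1:ℝ),(1:ℝ)) ∨ p = (Fd,Gd) ∨
      ∃ i, a+1 ≤ i ∧ i < b ∧ p = (F i, G i) := by
    intro p hp
    rw [hsrcs] at hp
    simp only [List.mem_append, List.mem_cons, List.mem_map, List.mem_singleton,
      List.mem_range'_1] at hp
    rcases hp with (rfl | rfl | ⟨i, ⟨hi1, hi2⟩, rfl⟩) | (rfl | hfalse)
    · left; rfl
    · right; right; left; rfl
    · right; right; right; exact ⟨i, hi1, by omega, rfl⟩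
    · right; left; rfl
    · simp at hfalse
  -- consistency and order preservation
  have hwin : ∀ i, a + 1 ≤ i → i < b → i ≤ σ.len := by intro i h1 h2; omega
  have hpair : ∀ p ∈ srcs, ∀ q ∈ srcs,
      (p.1 = q.1 → p.2 = q.2) ∧ (p.1 < q.1 → p.2 < q.2) := by
    intro p hp q hq
    rcases hmemchar p hp with rfl | rfl | rfl | ⟨i, hi1, hi2, rfl⟩ <;>
      rcases hmemchar q hq with rfl | rfl | rfl | ⟨j, hj1, hj2, rfl⟩
    · exact ⟨fun _ => rfl, fun h => absurd h (lt_irrefl _)⟩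
    · exact ⟨fun h => h, fun _ => one_pos⟩
    · constructor
      · intro h
        exact (hFd0.mp h.symm).symm
      · intro h
        rcases eq_or_lt_of_le (Int.fract_nonneg (u' - u)) with he | hl
        · exact absurd (hFd0.mpr he.symm) (ne_of_gt h)
        · exact hl
    · constructor
      · intro h
        exact ((hFG0 j (hwin j hj1 hj2)).mp h.symm).symm
      · intro h
        rcases eq_or_lt_of_le (Int.fract_nonneg (σ.pref j - u)) with he | hl
        · exact absurd ((hFG0 j (hwin j hj1 hj2)).mpr he.symm) (ne_of_gt h)
        · exact hl
    · exact ⟨fun h => h, fun h => absurd h (by norm_num)⟩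
    · exact ⟨fun _ => rfl, fun h => absurd h (lt_irrefl _)⟩
    · constructor
      · intro h
        exact absurd h.symm (ne_of_lt (Int.fract_lt_one _))
      · intro h
        exact absurd h (not_lt.mpr (Int.fract_lt_one _).le)
    · constructor
      · intro h
        exact absurd h.symm (ne_of_lt (Int.fract_lt_one _))
      · intro h
        exact absurd h (not_lt.mpr (Int.fract_lt_one _).le)
    · constructor
      · intro h
        exact hFd0.mp h
      · intro h
        exact absurd h (not_lt.mpr (Int.fract_nonneg _))
    · exact ⟨fun h => absurd h (ne_of_lt (Int.fract_lt_one _)),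
        fun _ => Int.fract_lt_one _⟩
    · exact ⟨fun _ => rfl, fun h => absurd h (lt_irrefl _)⟩
    · constructor
      · intro h
        exact ((hFdi j (hwin j hj1 hj2)).2.1).mp h
      · intro h
        exact ((hFdi j (hwin j hj1 hj2)).1).mp h
    · constructor
      · intro h
        exact (hFG0 i (hwin i hi1 hi2)).mp h
      · intro h
        exact absurd h (not_lt.mpr (Int.fract_nonneg _))
    · exact ⟨fun h => absurd h (ne_of_lt (Int.fract_lt_one _)),
        fun _ => Int.fract_lt_one _⟩
    · constructor
      · intro h
        exact (((hFdi i (hwin i hi1 hi2)).2.1).mp h.symm).symm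
      · intro h
        exact ((hFdi i (hwin i hi1 hi2)).2.2).mp h
    · constructor
      · intro h
        have hd := hFG_diff i (hwin i hi1 hi2) j (hwin j hj1 hj2)
        linarith
      · intro h
        have hd := hFG_diff i (hwin i hi1 hi2) j (hwin j hj1 hj2)
        linarith
  -- sort and dedup
  set L : List (ℝ × ℝ) := srcs.mergeSort (fun p q => decide (p.1 ≤ q.1)) with hL
  have hperm : L.Perm srcs := List.mergeSort_perm srcs _
  have hmemL : ∀ x : ℝ × ℝ, x ∈ L ↔ x ∈ srcs := fun x => hperm.mem_iff
  have hsorted : List.Pairwise (fun p q : ℝ × ℝ => p.1 ≤ q.1) L := by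
    have h := List.pairwise_mergeSort (le := fun p q : ℝ × ℝ => decide (p.1 ≤ q.1))
      (fun a b c hab hbc =>
        decide_eq_true (le_trans (of_decide_eq_true hab) (of_decide_eq_true hbc)))
      (fun a b => by
        rcases le_total a.1 b.1 with h | h
        · simp [h]
        · simp [h]) srcs
    rw [← hL] at h
    exact h.imp (fun hab => of_decide_eq_true hab)
  set ctrl : List (ℝ × ℝ) := List.destutter (· ≠ ·) L with hctrl
  have hsubL : ∀ x : ℝ × ℝ, x ∈ ctrl → x ∈ srcs := by
    intro x hx
    exact (hmemL x).mp ((List.destutter_sublist _ L).subset hx)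
  have hmemctrl : ∀ x : ℝ × ℝ, x ∈ srcs → x ∈ ctrl := by
    intro x hx
    exact mem_destutter_ne L x ((hmemL x).mpr hx)
  have hch : List.Chain' Rlt ctrl := by
    apply chain'_rlt_of_props
    · exact List.isChain_destutter _ L
    · exact List.Pairwise.sublist (List.destutter_sublist _ L) hsorted
    · intro p hp q hq
      exact (hpair p (hsubL p hp) q (hsubL q hq)).1
    · intro p hp q hq
      exact (hpair p (hsubL p hp) q (hsubL q hq)).2
  have h00 : ((0:ℝ),(0:ℝ)) ∈ ctrl := hmemctrl _ (by rw [hsrcs]; simp)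
  have h11 : ((1:ℝ),(1:ℝ)) ∈ ctrl := hmemctrl _ (by rw [hsrcs]; simp)
  have hmemFd : (Fd, Gd) ∈ ctrl := hmemctrl _ (by rw [hsrcs]; simp)
  have hmemFi : ∀ i, a+1 ≤ i → i < b → (F i, G i) ∈ ctrl := by
    intro i h1 h2
    apply hmemctrl
    rw [hsrcs]
    simp only [List.mem_append, List.mem_cons, List.mem_map, List.mem_singleton,
      List.mem_range'_1]
    left; right; right
    exact ⟨i, ⟨h1, by omega⟩, rfl⟩
  -- the warp
  set φ : ℝ → ℝ := warp ctrl with hφ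
  set χ : ℝ → ℝ := warp (ctrl.map Prod.swap) with hχ
  have hmono : StrictMono φ := warp_strictMono hch h00 h11
  have hint : ∀ (x : ℝ) (k : ℤ), φ (x + k) = φ x + k := fun x k => warp_addInt x k
  have hχφ : ∀ x, χ (φ x) = x := fun x => warp_inverse hch h00 h11 x
  have hφχ : ∀ y, φ (χ y) = y := by
    intro y
    have hch' : List.Chain' Rlt (ctrl.map Prod.swap) := chain'_swap hch
    have h00' : ((0:ℝ),(0:ℝ)) ∈ ctrl.map Prod.swap := by
      have := List.mem_map_of_mem (f := Prod.swap) h00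
      simpa using this
    have h11' : ((1:ℝ),(1:ℝ)) ∈ ctrl.map Prod.swap := by
      have := List.mem_map_of_mem (f := Prod.swap) h11
      simpa using this
    have hw := warp_inverse hch' h00' h11' y
    rw [List.map_map] at hw
    have hid : (Prod.swap ∘ Prod.swap : ℝ × ℝ → ℝ × ℝ) = id := by
      funext p; simp
    rw [hid, List.map_id] at hw
    exact hw
  have hzero : φ 0 = 0 := by
    apply warp_value hch rfl
    rw [Int.fract_zero]
    exact h00
  -- the restricted signals
  have hlen₁ : (σ.restrict t t').len = m := restrict_len σ t t' ht0 htt htd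
  have hlen₂ : (σ.restrict u u').len = m := by
    rw [restrict_len σ u u' hu0 huu hud, hra, hrb]
  apply traceValue_transfer W (σ.restrict t t') (σ.restrict u u') φ χ hmono hint hχφ hφχ hzero
  · rw [hlen₁, hlen₂]
  · -- values agree
    intro j hj
    rw [hlen₁] at hj
    rw [restrict_val σ t t' ht0 htt htd hj,
      restrict_val σ u u' hu0 huu hud (by rw [hra, hrb]; exact hj), hra]
  · -- breakpoints are mapped to breakpoints
    intro j hj
    rw [hlen₁] at hj
    rcases Nat.eq_zero_or_pos j with rfl | hj1
    · rw [Signal.pref_zero', Signal.pref_zero', hzero]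
    rcases eq_or_lt_of_le hj with rfl | hjm
    · -- j = m
      rw [restrict_pref_last σ t t' ht0 htt htd]
      have h2 : (σ.restrict u u').pref m = u' - u := by
        have := restrict_pref_last σ u u' hu0 huu hud
        rwa [hra, hrb] at this
      rw [h2]
      exact warp_value hch keyd hmemFd
    · -- 1 ≤ j < m
      rw [restrict_pref_mid σ t t' ht0 htt htd hj1 hjm]
      have h2 : (σ.restrict u u').pref j = σ.pref (a + j) - u := by
        have := restrict_pref_mid σ u u' hu0 huu hud hj1 (by rw [hra, hrb]; exact hjm)
        rwa [hra] at this
      rw [h2]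
      exact warp_value hch (key (a+j) (by omega)) (hmemFi (a+j) (by omega) (by omega))

end SecE3b
end QTPM
namespace QTPM
section SecE4
set_option linter.unusedSectionVars false

variable {X : Type}

lemma sig_extract (σ : Signal X) (ν₀ ν₁ : Bool → ℝ) (hsig : sigFun σ ν₀ = sigFun σ ν₁) :
    (∀ i ≤ σ.len, ∀ z : ℤ, |z| ≤ Mzb σ →
        cmp (ν₀ true) (σ.pref i - z) = cmp (ν₁ true) (σ.pref i - z)) ∧
    (∀ i ≤ σ.len, ∀ z : ℤ, |z| ≤ Mzb σ →
        cmp (ν₀ false) (σ.pref i - z) = cmp (ν₁ false) (σ.pref i - z)) ∧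
    (∀ z : ℤ, |z| ≤ Mzb σ →
        cmp (ν₀ false - ν₀ true) (z:ℝ) = cmp (ν₁ false - ν₁ true) (z:ℝ)) := by
  refine ⟨?_, ?_, ?_⟩
  · intro i hi z hz
    have hzmem : z ∈ Finset.Icc (-(Mzb σ)) (Mzb σ) := by
      rw [Finset.mem_Icc]; rw [abs_le] at hz; exact hz
    have h := congrFun hsig ((0 : Fin 3), (⟨i, by omega⟩ : Fin (σ.len + 1)), (⟨z, hzmem⟩ : ZT σ))
    unfold sigFun base thr at h
    simpa using h
  · intro i hi z hz
    have hzmem : z ∈ Finset.Icc (-(Mzb σ)) (Mzb σ) := by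
      rw [Finset.mem_Icc]; rw [abs_le] at hz; exact hz
    have h := congrFun hsig ((1 : Fin 3), (⟨i, by omega⟩ : Fin (σ.len + 1)), (⟨z, hzmem⟩ : ZT σ))
    unfold sigFun base thr at h
    simpa using h
  · intro z hz
    have hzmem : z ∈ Finset.Icc (-(Mzb σ)) (Mzb σ) := by
      rw [Finset.mem_Icc]; rw [abs_le] at hz; exact hz
    have h := congrFun hsig ((2 : Fin 3), (⟨0, by omega⟩ : Fin (σ.len + 1)), (⟨z, hzmem⟩ : ZT σ))
    unfold sigFun base thr at h
    simpa using h

end SecE4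

theorem statement0' {X L C S : Type} [Finite X] [Finite L] [Finite C]
    [CSemiring S] [CompleteCSemiring S]
    (W : TSWA X L C S) (σ : Signal X) :
    ∃ (m : ℕ) (Z : Fin m → Set (Bool → ℝ)) (s : Fin m → S),
      (∀ i, IsZone (Z i)) ∧
      (∀ i j, i ≠ j → Disjoint (Z i) (Z j)) ∧
      (⋃ i, Z i) = {ν : Bool → ℝ | 0 ≤ ν true ∧ ν true < ν false ∧ ν false ≤ σ.dur} ∧
      (∀ t t' : ℝ, 0 ≤ t → t < t' → t' ≤ σ.dur →
        ∃ i, ∃ ν ∈ Z i, ν true = t ∧ ν false = t' ∧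
          traceValue (σ.restrict t t') W = s i) := by
  classical
  let e : Fin (Fintype.card (SigT σ)) ≃ SigT σ := (Fintype.equivFin (SigT σ)).symm
  let sv : SigT σ → S := fun s =>
    if h : (Zcell σ s).Nonempty then
      traceValue (σ.restrict (h.choose true) (h.choose false)) W
    else CSemiring.one
  refine ⟨Fintype.card (SigT σ), fun i => Zcell σ (e i), fun i => sv (e i), ?_, ?_, ?_, ?_⟩
  · intro i
    exact isZone_Zcell σ (e i)
  · intro i j hij
    rw [Set.disjoint_left]
    intro ν hνi hνj
    exact hij (e.injective (hνi.2.symm.trans hνj.2))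
  · ext ν
    constructor
    · intro hν
      rcases Set.mem_iUnion.mp hν with ⟨i, hi⟩
      exact hi.1
    · intro hν
      apply Set.mem_iUnion.mpr
      refine ⟨e.symm (sigFun σ ν), ?_⟩
      show ν ∈ Zcell σ (e (e.symm (sigFun σ ν)))
      rw [e.apply_symm_apply]
      exact ⟨hν, rfl⟩
  · intro t t' h1 h2 h3
    set ν₀ : Bool → ℝ := fun bb => if bb then t else t' with hν₀
    have hν₀t : ν₀ true = t := by rw [hν₀]; simp
    have hν₀t' : ν₀ false = t' := by rw [hν₀]; simp
    have hdom₀ : ν₀ ∈ domSet σ := by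
      refine ⟨?_, ?_, ?_⟩ <;> rw [hν₀] <;> simpa using (by assumption)
    refine ⟨e.symm (sigFun σ ν₀), ν₀, ?_, hν₀t, hν₀t', ?_⟩
    · show ν₀ ∈ Zcell σ (e (e.symm (sigFun σ ν₀)))
      rw [e.apply_symm_apply]
      exact ⟨hdom₀, rfl⟩
    · show traceValue (σ.restrict t t') W = sv (e (e.symm (sigFun σ ν₀)))
      rw [e.apply_symm_apply]
      have hne : (Zcell σ (sigFun σ ν₀)).Nonempty := ⟨ν₀, hdom₀, rfl⟩
      show traceValue (σ.restrict t t') W = dite _ _ _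
      rw [dif_pos hne]
      set ν₁ : Bool → ℝ := hne.choose with hν₁def
      have hν₁ : ν₁ ∈ Zcell σ (sigFun σ ν₀) := hne.choose_spec
      obtain ⟨⟨hd1, hd2, hd3⟩, hsig₁⟩ := hν₁
      obtain ⟨HA, HB, HC⟩ := sig_extract σ ν₀ ν₁ hsig₁.symm
      rw [hν₀t] at HA
      rw [hν₀t'] at HB
      rw [hν₀t, hν₀t'] at HC
      exact constancy σ W t t' (ν₁ true) (ν₁ false) h1 h2 h3 hd1 hd2 hd3 HA HB HC
end QTPM
namespace QTPM

/-- For any TSWA `W` over `ℝ` and a complete semiring `S`, and any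
piecewise-constant signal `σ`, there is a finite family of pairs `(Zᵢ, sᵢ)` of a zone
over the two clocks `{t_begin, t_end}` (encoded as `Bool`, with `true = t_begin` and
`false = t_end`) and a semiring value, such that the zones partition the domain
`{(t,t') | 0 ≤ t < t' ≤ |σ|}`, and for every `0 ≤ t < t' ≤ |σ|` there are `i` and
`ν ∈ Zᵢ` with `ν(t_begin) = t`, `ν(t_end) = t'`, and `(M(σ,W))(t,t') = sᵢ`, where
`(M(σ,W))(t,t') = α(σ([t,t')), W)` is the quantitative matching function. -/
theorem statement0 {X L C S : Type} [Finite X] [Finite L] [Finite C]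
    [CSemiring S] [CompleteCSemiring S]
    (W : TSWA X L C S) (σ : Signal X) :
    ∃ (m : ℕ) (Z : Fin m → Set (Bool → ℝ)) (s : Fin m → S),
      (∀ i, IsZone (Z i)) ∧
      (∀ i j, i ≠ j → Disjoint (Z i) (Z j)) ∧
      (⋃ i, Z i) = {ν : Bool → ℝ | 0 ≤ ν true ∧ ν true < ν false ∧ ν false ≤ σ.dur} ∧
      (∀ t t' : ℝ, 0 ≤ t → t < t' → t' ≤ σ.dur →
        ∃ i, ∃ ν ∈ Z i, ν true = t ∧ ν false = t' ∧
          traceValue (σ.restrict t t') W = s i) := by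
  exact statement0' W σ

end QTPM
end

section
/- Let S^sym be the WSTTS of a signal σ=a₁^{τ₁}⋯a_n^{τ_n} and a TSWA W. For every reachable symbolic state (l,Z,ā) ∈ Reach(S^sym) and all c,c' ∈ C⊔{T,0} (where 0 is the reference clock of constant value 0), the canonical zone bound d_{Z,c,c'} is either ∞, or there exist integers k₀,k₁,…,k_n ∈ ℤ such that d_{Z,c,c'} = k₀ + Σ_{i=1}^{n} k_i·(Σ_{j=1}^{i} τ_j). -/
attribute [local instance] Classical.propDecidable

namespace QTPM



/-- Atom `(x, y, b, s)`: constraint `μ x - μ y < b` (if `s`) or `μ x - μ y ≤ b`. -/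
abbrev AtomList (V : Type) : Type := List (V × V × ℝ × Bool)

def asat {V : Type} (A : AtomList V) (μ : V → ℝ) : Prop :=
  ∀ a ∈ A, if a.2.2.2 then μ a.1 - μ a.2.1 < a.2.2.1 else μ a.1 - μ a.2.1 ≤ a.2.2.1

/-- The min-weight matrix of an atom list. -/
noncomputable def wmat {V : Type} [DecidableEq V] (A : AtomList V) (x y : V) : EReal :=
  A.foldr (fun a acc => if a.1 = x ∧ a.2.1 = y then min (a.2.2.1 : EReal) acc else acc) ⊤

theorem wmat_ne_bot {V : Type} [DecidableEq V] (A : AtomList V) (x y : V) :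
    wmat A x y ≠ ⊥ := by
  rw [← bot_lt_iff_ne_bot]
  induction A with
  | nil => simp [wmat]
  | cons a A ih =>
    simp only [wmat, List.foldr] at ih ⊢
    split
    · exact lt_min (bot_lt_iff_ne_bot.2 (EReal.coe_ne_bot _)) ih
    · exact ih

theorem wmat_le_atom {V : Type} [DecidableEq V] {A : AtomList V} {a} (ha : a ∈ A) :
    wmat A a.1 a.2.1 ≤ (a.2.2.1 : EReal) := by
  induction A with
  | nil => simp at ha
  | cons b A ih =>
    rcases List.mem_cons.1 ha with rfl | ha'
    · simp only [wmat, List.foldr, and_self, if_pos (⟨rfl, rfl⟩ : a.1 = a.1 ∧ a.2.1 = a.2.1)]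
      exact min_le_left _ _
    · simp only [wmat, List.foldr]
      split
      · exact le_trans (min_le_right _ _) (ih ha')
      · exact ih ha'

theorem le_wmat {V : Type} [DecidableEq V] {A : AtomList V} {μ : V → ℝ} (h : asat A μ)
    (x y : V) : ((μ x : EReal)) ≤ wmat A x y + (μ y : EReal) := by
  induction A with
  | nil =>
    simp only [wmat, List.foldr]
    rw [EReal.top_add_of_ne_bot (EReal.coe_ne_bot _)]
    exact le_top
  | cons a A ih =>
    have hA : asat A μ := fun b hb => h b (List.mem_cons_of_mem _ hb)
    have ih' := ih hA
    simp only [wmat, List.foldr] at ih' ⊢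
    split
    · rename_i hxy
      obtain ⟨h1, h2⟩ := hxy
      have ha := h a (List.mem_cons_self)
      have hdiff : μ x - μ y ≤ a.2.2.1 := by
        subst h1; subst h2
        split at ha
        · exact le_of_lt ha
        · exact ha
      have hc : ((μ x : EReal)) ≤ (a.2.2.1 : EReal) + (μ y : EReal) := by
        rw [← EReal.coe_add, EReal.coe_le_coe_iff]; linarith
      rcases min_cases (a.2.2.1 : EReal) (A.foldr (fun a acc => if a.1 = x ∧ a.2.1 = y then min (a.2.2.1 : EReal) acc else acc) ⊤) with ⟨hm, -⟩ | ⟨hm, -⟩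
      · rw [hm]; exact hc
      · rw [hm]; exact ih'
    · exact ih'

/-- Bounds of `wmat` lie in `insert ⊤ (coe '' G)` when atom bounds lie in `G`. -/
theorem wmat_mem {V : Type} [DecidableEq V] {A : AtomList V} {G : Set ℝ}
    (hA : ∀ a ∈ A, a.2.2.1 ∈ G) (x y : V) :
    wmat A x y = ⊤ ∨ ∃ g ∈ G, wmat A x y = (g : EReal) := by
  induction A with
  | nil => left; simp [wmat]
  | cons a A ih =>
    have hA' : ∀ b ∈ A, b.2.2.1 ∈ G := fun b hb => hA b (List.mem_cons_of_mem _ hb)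
    have ih' := ih hA'
    simp only [wmat, List.foldr] at ih' ⊢
    split
    · rcases min_cases ((a.2.2.1 : ℝ) : EReal) (A.foldr (fun a acc => if a.1 = x ∧ a.2.1 = y then min (a.2.2.1 : EReal) acc else acc) ⊤) with ⟨hm, -⟩ | ⟨hm, -⟩
      · rw [hm]; exact Or.inr ⟨a.2.2.1, hA a (List.mem_cons_self), rfl⟩
      · rw [hm]; exact ih'
    · exact ih'

section Paths
variable {V : Type} (w : V → V → EReal)

/-- Value of the path `a :: l ++ [b]` through weights `w`. -/
noncomputable def pv : List V → V → V → EReal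
  | [], a, b => w a b
  | c :: l, a, b => w a c + pv l c b

@[simp] theorem pv_nil (a b : V) : pv w [] a b = w a b := rfl
@[simp] theorem pv_cons (c : V) (l : List V) (a b : V) :
    pv w (c :: l) a b = w a c + pv w l c b := rfl

variable {w}

theorem pv_ne_bot (hw : ∀ x y, w x y ≠ ⊥) : ∀ l a b, pv w l a b ≠ ⊥ := by
  intro l
  induction l with
  | nil => exact hw
  | cons c l ih =>
    intro a b
    simp only [pv_cons]
    intro h
    rcases EReal.add_eq_bot_iff.1 h with h | h
    · exact hw a c h
    · exact ih c b h

theorem pv_splice (a : V) (s : List V) (c : V) (t : List V) (b : V) :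
    pv w (s ++ c :: t) a b = pv w s a c + pv w t c b := by
  induction s generalizing a with
  | nil => rfl
  | cons d s ih => simp only [List.cons_append, pv_cons, ih d, add_assoc]

/-- Telescoping: a feasible valuation gives a lower bound on path values. -/
theorem le_pv {μ : V → ℝ} (hμ : ∀ x y, (μ x : EReal) ≤ w x y + (μ y : EReal)) :
    ∀ l (a b : V), (μ a : EReal) ≤ pv w l a b + (μ b : EReal) := by
  intro l
  induction l with
  | nil => exact hμ
  | cons c l ih =>
    intro a b
    calc (μ a : EReal) ≤ w a c + (μ c : EReal) := hμ a c
    _ ≤ w a c + (pv w l c b + (μ b : EReal)) := add_le_add_right (ih c b) _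
    _ = pv w (c :: l) a b + (μ b : EReal) := by rw [pv_cons, add_assoc]

end Paths

section Bellman
variable {V : Type} [Finite V] [Nonempty V]
variable (w : V → V → EReal) (bt : V)

/-- Bellman iteration. -/
noncomputable def dd : ℕ → V → EReal
  | 0, a => w a bt
  | k + 1, a => min (dd k a) (⨅ c, w a c + dd k c)

variable {w bt}

omit [Finite V] [Nonempty V] in
theorem dd_succ_le (k : ℕ) (a : V) : dd w bt (k+1) a ≤ dd w bt k a := min_le_left _ _

omit [Finite V] [Nonempty V] in
theorem dd_anti {k m : ℕ} (h : k ≤ m) (a : V) : dd w bt m a ≤ dd w bt k a := by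
  induction m with
  | zero => cases Nat.le_zero.1 h; exact le_refl _
  | succ m ih =>
    rcases Nat.lt_or_ge k (m+1) with h' | h'
    · exact le_trans (dd_succ_le m a) (ih (Nat.lt_succ_iff.1 h'))
    · have : k = m + 1 := le_antisymm h h'
      subst this; exact le_refl _

omit [Finite V] [Nonempty V] in
theorem dd_le_pv {k : ℕ} {l : List V} (h : l.length ≤ k) (a : V) :
    dd w bt k a ≤ pv w l a bt := by
  induction l generalizing a k with
  | nil => exact dd_anti (Nat.zero_le _) a
  | cons c l ih =>
    obtain ⟨k', rfl⟩ : ∃ k', k = k' + 1 := by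
      cases k with
      | zero => simp at h
      | succ k => exact ⟨k, rfl⟩
    refine le_trans (min_le_right _ _) (le_trans (iInf_le _ c) ?_)
    rw [pv_cons]
    exact add_le_add_right (ih (Nat.succ_le_succ_iff.1 h) c) _

/-- Attainment: each Bellman value is `⊤` or the value of an actual path. -/
theorem dd_attained (hw : ∀ x y, w x y ≠ ⊥) (k : ℕ) (a : V) :
    dd w bt k a = ⊤ ∨ ∃ l : List V, dd w bt k a = pv w l a bt := by
  induction k generalizing a with
  | zero => exact Or.inr ⟨[], rfl⟩
  | succ k ih =>
    obtain ⟨c₀, hc₀⟩ := Finite.exists_min (fun c => w a c + dd w bt k c)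
    have hinf : (⨅ c, w a c + dd w bt k c) = w a c₀ + dd w bt k c₀ :=
      le_antisymm (iInf_le _ c₀) (le_iInf hc₀)
    rcases min_cases (dd w bt k a) (⨅ c, w a c + dd w bt k c) with ⟨hm, -⟩ | ⟨hm, -⟩
    · rcases ih a with h | ⟨l, hl⟩
      · left; rw [dd, hm, h]
      · right; exact ⟨l, by rw [dd, hm, hl]⟩
    · rcases ih c₀ with h | ⟨l, hl⟩
      · left; rw [dd, hm, hinf, h, EReal.add_top_of_ne_bot (hw a c₀)]
      · right; exact ⟨c₀ :: l, by rw [dd, hm, hinf, hl, pv_cons]⟩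

/-- A feasible valuation is below every Bellman value. -/
theorem le_dd {μ : V → ℝ} (hμ : ∀ x y, (μ x : EReal) ≤ w x y + (μ y : EReal))
    (k : ℕ) (a : V) : (μ a : EReal) ≤ dd w bt k a + (μ bt : EReal) := by
  induction k generalizing a with
  | zero => exact hμ a bt
  | succ k ih =>
    rcases min_cases (dd w bt k a) (⨅ c, w a c + dd w bt k c) with ⟨hm, -⟩ | ⟨hm, -⟩
    · rw [dd, hm]; exact ih a
    · rw [dd, hm]
      obtain ⟨c₀, hc₀⟩ := Finite.exists_min (fun c => w a c + dd w bt k c)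
      have hinf : (⨅ c, w a c + dd w bt k c) = w a c₀ + dd w bt k c₀ :=
        le_antisymm (iInf_le _ c₀) (le_iInf hc₀)
      rw [hinf, add_assoc]
      exact le_trans (hμ a c₀) (add_le_add_right (ih c₀) _)

end Bellman

theorem exists_split_of_not_nodup {V : Type} {l : List V} (h : ¬ l.Nodup) :
    ∃ p : List V, ∃ v : V, ∃ q r : List V, l = p ++ v :: (q ++ v :: r) := by
  induction l with
  | nil => exact absurd List.nodup_nil h
  | cons x xs ih =>
    rw [List.nodup_cons] at h
    push_neg at h
    by_cases hx : x ∈ xs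
    · obtain ⟨s, t, rfl⟩ := List.append_of_mem hx
      exact ⟨[], x, s, t, rfl⟩
    · obtain ⟨p, v, q, r, rfl⟩ := ih (h hx)
      exact ⟨x :: p, v, q, r, rfl⟩

theorem exists_split_of_long {V : Type} [Fintype V] {l : List V}
    (h : Fintype.card V < l.length) :
    ∃ p : List V, ∃ v : V, ∃ q r : List V, l = p ++ v :: (q ++ v :: r) := by
  refine exists_split_of_not_nodup fun hn => ?_
  exact absurd (hn.length_le_card) (not_le.2 h)
section F5
variable {V : Type} [Fintype V] [Nonempty V] {w : V → V → EReal} {bt : V}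

/-- No negative cycles. -/
def NoNegCyc (w : V → V → EReal) : Prop := ∀ (v : V) (l : List V), (0 : EReal) ≤ pv w l v v

/-- With no negative cycles, `dd (card V)` bounds all path values. -/
theorem dd_card_le_pv (hc : NoNegCyc w) (a : V) (l : List V) :
    dd w bt (Fintype.card V) a ≤ pv w l a bt := by
  generalize hn : l.length = n
  induction n using Nat.strong_induction_on generalizing l a with
  | _ n ih =>
  rcases le_or_gt l.length (Fintype.card V) with hl | hl
  · exact dd_le_pv hl a
  · have hlong : Fintype.card V < (a :: l).length := by
      simp only [List.length_cons]; omega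
    obtain ⟨p, v, q, r, hsplit⟩ := exists_split_of_long hlong
    cases p with
    | nil =>
      simp only [List.nil_append, List.cons.injEq] at hsplit
      obtain ⟨rfl, rfl⟩ := hsplit
      rw [pv_splice]
      have hrlen : r.length < n := by
        simp only [List.length_append, List.length_cons] at hn
        omega
      exact le_trans (ih r.length hrlen a r rfl) (le_add_of_nonneg_left (hc a q))
    | cons a' p' =>
      simp only [List.cons_append, List.cons.injEq] at hsplit
      obtain ⟨rfl, rfl⟩ := hsplit
      rw [pv_splice a p' v (q ++ v :: r) bt, pv_splice]
      have h2 : pv w (p' ++ v :: r) a bt ≤ pv w p' a v + (pv w q v v + pv w r v bt) := by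
        rw [pv_splice]
        exact add_le_add_right (le_add_of_nonneg_left (hc v q)) _
      have hrlen : (p' ++ v :: r).length < n := by
        simp only [List.length_append, List.length_cons] at hn ⊢
        omega
      exact le_trans (ih _ hrlen a _ rfl) h2

/-- Triangle inequality for stabilized Bellman values. -/
theorem dd_triangle (hw : ∀ x y, w x y ≠ ⊥) (hc : NoNegCyc w) (a c : V) :
    dd w bt (Fintype.card V) a ≤ w a c + dd w bt (Fintype.card V) c := by
  rcases dd_attained hw (Fintype.card V) c with h | ⟨l, hl⟩
  · rw [h, EReal.add_top_of_ne_bot (hw a c)]; exact le_top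
  · rw [hl, ← pv_cons]
    exact dd_card_le_pv hc a (c :: l)
end F5

section Master
variable {V : Type} [Fintype V] [Nonempty V] {w : V → V → EReal} {bt : V}

theorem dd_ne_bot (hw : ∀ x y, w x y ≠ ⊥) (k : ℕ) (a : V) : dd w bt k a ≠ ⊥ := by
  rcases dd_attained hw k a with h | ⟨l, hl⟩
  · rw [h]; exact top_ne_bot
  · rw [hl]; exact pv_ne_bot hw l a bt

theorem dd_mem {G : AddSubgroup ℝ}
    (hwG : ∀ x y, w x y = ⊤ ∨ ∃ g ∈ G, w x y = (g : EReal)) (k : ℕ) (a : V) :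
    dd w bt k a = ⊤ ∨ ∃ g ∈ G, dd w bt k a = (g : EReal) := by
  induction k generalizing a with
  | zero => exact hwG a bt
  | succ k ih =>
    obtain ⟨c₀, hc₀⟩ := Finite.exists_min (fun c => w a c + dd w bt k c)
    have hinf : (⨅ c, w a c + dd w bt k c) = w a c₀ + dd w bt k c₀ :=
      le_antisymm (iInf_le _ c₀) (le_iInf hc₀)
    have hterm : w a c₀ + dd w bt k c₀ = ⊤ ∨ ∃ g ∈ G, w a c₀ + dd w bt k c₀ = (g : EReal) := by
      rcases hwG a c₀ with h1 | ⟨g1, hg1, h1⟩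
      · left; rw [h1, EReal.top_add_of_ne_bot]
        exact dd_ne_bot (fun x y hb => by rcases hwG x y with h | ⟨g, _, h⟩ <;> simp [h] at hb) k c₀
      · rcases ih c₀ with h2 | ⟨g2, hg2, h2⟩
        · left; rw [h2, EReal.add_top_of_ne_bot]; rw [h1]; exact EReal.coe_ne_bot _
        · right; exact ⟨g1 + g2, add_mem hg1 hg2, by rw [h1, h2, EReal.coe_add]⟩
    rcases min_cases (dd w bt k a) (⨅ c, w a c + dd w bt k c) with ⟨hm, -⟩ | ⟨hm, -⟩
    · rw [dd, hm]; exact ih a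
    · rw [dd, hm, hinf]; exact hterm

end Master

section MainMaster
variable {V : Type} [Nonempty V]

/-- The main zone-bound lemma for constraint systems. -/
theorem master_bound [Finite V] {A : AtomList V} {G : AddSubgroup ℝ}
    (hA : ∀ a ∈ A, a.2.2.1 ∈ G) (hne : ∃ μ : V → ℝ, asat A μ) (x y : V) :
    sSup ((fun μ : V → ℝ => ((μ x - μ y : ℝ) : EReal)) '' {μ | asat A μ}) = ⊤ ∨
    ∃ g ∈ G, sSup ((fun μ : V → ℝ => ((μ x - μ y : ℝ) : EReal)) '' {μ | asat A μ})
      = (g : EReal) := by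
  classical
  cases nonempty_fintype V
  obtain ⟨μ₀, hμ₀⟩ := hne
  have hμ₀mem : μ₀ ∈ {μ : V → ℝ | asat A μ} := hμ₀
  by_cases hxy : x = y
  · subst hxy
    right
    refine ⟨0, zero_mem _, ?_⟩
    have himg : (fun μ : V → ℝ => ((μ x - μ x : ℝ) : EReal)) '' {μ | asat A μ} = {((0:ℝ) : EReal)} := by
      apply Set.eq_singleton_iff_nonempty_unique_mem.2
      constructor
      · exact ⟨_, ⟨μ₀, hμ₀, rfl⟩⟩
      · rintro _ ⟨μ, -, rfl⟩; norm_num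
    rw [himg, sSup_singleton]
  set w : V → V → EReal := wmat A with hw
  have hwbot : ∀ u v, w u v ≠ ⊥ := fun u v => wmat_ne_bot A u v
  have hfeas : ∀ μ : V → ℝ, asat A μ → ∀ u v, ((μ u : EReal)) ≤ w u v + (μ v : EReal) :=
    fun μ hμ u v => le_wmat hμ u v
  have hcyc : NoNegCyc w := by
    intro v l
    have h := le_pv (hfeas μ₀ hμ₀) l v v
    have h2 : (0 : EReal) + ((μ₀ v : ℝ) : EReal) ≤ pv w l v v + ((μ₀ v : ℝ) : EReal) := by
      rw [zero_add]; exact h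
    exact (EReal.addLECancellable_coe (μ₀ v)).add_le_add_iff_right.1 h2
  set N := Fintype.card V with hN
  set D := dd w y N x with hD
  have hDmem : D = ⊤ ∨ ∃ g ∈ G, D = (g : EReal) := dd_mem (fun u v => wmat_mem hA u v) N x
  rcases hDmem with hDtop | ⟨g, hgG, hDg⟩
  · -- unbounded case
    left
    rw [sSup_eq_top]
    intro b hb
    set Rset : Set V := {v | dd w y N v ≠ ⊤ ∨ v = y} with hRset
    have hyR : y ∈ Rset := Or.inr rfl
    have hxR : x ∉ Rset := by
      intro hx
      rcases hx with h | h
      · exact h hDtop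
      · exact hxy h
    have key : ∀ M : ℝ, 0 ≤ M → asat A (fun v => μ₀ v + (if v ∈ Rset then 0 else M)) := by
      intro M hM a ha
      have hatom := wmat_le_atom (A := A) ha
      have hRimp : a.1 ∉ Rset → a.2.1 ∉ Rset := by
        intro hu hv
        apply hu
        rcases hv with hv | hv
        · refine Or.inl fun htop => ?_
          have h1 : dd w y N a.1 ≤ w a.1 a.2.1 + dd w y N a.2.1 := dd_triangle hwbot hcyc _ _
          rw [htop] at h1
          have h2 : w a.1 a.2.1 + dd w y N a.2.1 < ⊤ :=
            EReal.add_lt_top (ne_top_of_le_ne_top (EReal.coe_ne_top _) hatom) hv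
          exact absurd h1 h2.not_ge
        · refine Or.inl fun htop => ?_
          have h1 : dd w y N a.1 ≤ dd w y 0 a.1 := dd_anti (Nat.zero_le _) _
          rw [htop, dd] at h1
          rw [hv] at hatom
          exact absurd (top_le_iff.1 (le_trans h1 hatom)) (EReal.coe_ne_top _)
      have hsat := hμ₀ a ha
      have hdle : (μ₀ a.1 + (if a.1 ∈ Rset then 0 else M)) - (μ₀ a.2.1 + (if a.2.1 ∈ Rset then 0 else M)) ≤ μ₀ a.1 - μ₀ a.2.1 := by
        by_cases hu : a.1 ∈ Rset
        · by_cases hv : a.2.1 ∈ Rset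
          · simp only [if_pos hu, if_pos hv]; linarith
          · simp only [if_pos hu, if_neg hv]; linarith
        · have hv := hRimp hu
          simp only [if_neg hu, if_neg hv]; linarith
      cases hb2 : a.2.2.2
      · simp only [hb2, Bool.false_eq_true, if_false] at hsat ⊢
        linarith
      · simp only [hb2, if_true] at hsat ⊢
        linarith
    obtain ⟨r, hbr, -⟩ := EReal.exists_between_coe_real hb
    set c : ℝ := μ₀ x - μ₀ y with hc
    set M : ℝ := max 0 (r - c) with hM
    have hM0 : 0 ≤ M := le_max_left _ _
    refine ⟨_, ⟨fun v => μ₀ v + (if v ∈ Rset then 0 else M), key M hM0, rfl⟩, ?_⟩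
    have hval : (μ₀ x + (if x ∈ Rset then 0 else M)) - (μ₀ y + (if y ∈ Rset then 0 else M)) = c + M := by
      simp only [if_neg hxR, if_pos hyR]; ring
    show b < (((μ₀ x + (if x ∈ Rset then 0 else M)) - (μ₀ y + (if y ∈ Rset then 0 else M)) : ℝ) : EReal)
    rw [hval]
    refine lt_of_lt_of_le hbr ?_
    rw [EReal.coe_le_coe_iff]
    have : r - c ≤ M := le_max_right _ _
    linarith
  · -- bounded case
    right
    refine ⟨g, hgG, ?_⟩
    have hupper : ∀ z ∈ (fun μ : V → ℝ => ((μ x - μ y : ℝ) : EReal)) '' {μ | asat A μ},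
        z ≤ (g : EReal) := by
      rintro _ ⟨μ, hμ, rfl⟩
      have h1 := le_dd (bt := y) (hfeas μ hμ) N x
      rw [← hD, hDg] at h1
      rw [← EReal.coe_add] at h1
      rw [EReal.coe_le_coe_iff] at h1
      rw [EReal.coe_le_coe_iff]
      linarith
    refine le_antisymm (sSup_le hupper) ?_
    -- construct a feasible valuation with value exactly g
    set φ : V → EReal := fun v => if v = y then 0 else dd w y N v with hφ
    have hφbot : ∀ v, φ v ≠ ⊥ := by
      intro v
      simp only [hφ]
      split
      · simp
      · exact dd_ne_bot hwbot N v
    have hwyy : (0 : EReal) ≤ w y y := by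
      have h := hfeas μ₀ hμ₀ y y
      have h2 : (0 : EReal) + ((μ₀ y : ℝ) : EReal) ≤ w y y + ((μ₀ y : ℝ) : EReal) := by
        rw [zero_add]; exact h
      exact (EReal.addLECancellable_coe (μ₀ y)).add_le_add_iff_right.1 h2
    have htri : ∀ u v, φ u ≤ w u v + φ v := by
      intro u v
      simp only [hφ]
      by_cases hu : u = y <;> by_cases hv : v = y
      · simp only [hu, hv, if_pos rfl]
        simpa using hwyy
      · simp only [hu, if_pos rfl, if_neg hv]
        rcases dd_attained hwbot N v with h | ⟨l, hl⟩
        · rw [h, EReal.add_top_of_ne_bot (hwbot y v)]; exact le_top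
        · rw [hl, ← pv_cons]
          exact hcyc y (v :: l)
      · simp only [hv, if_neg hu, if_pos rfl]
        have h0 : dd w y N u ≤ w u y := dd_anti (bt := y) (Nat.zero_le N) u
        simpa using h0
      · simp only [if_neg hu, if_neg hv]
        exact dd_triangle hwbot hcyc u v
    set K : ℝ := max (g - μ₀ x) (-(μ₀ y)) with hK
    set μE : V → EReal := fun v => min (φ v) ((K + μ₀ v : ℝ) : EReal) with hμE
    have hμEbot : ∀ v, μE v ≠ ⊥ := by
      intro v
      simp only [hμE]
      beta_reduce
      rw [← bot_lt_iff_ne_bot]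
      exact lt_min (bot_lt_iff_ne_bot.2 (hφbot v)) (bot_lt_iff_ne_bot.2 (EReal.coe_ne_bot _))
    have hμEtop : ∀ v, μE v ≠ ⊤ := by
      intro v
      simp only [hμE]
      exact ne_top_of_le_ne_top (EReal.coe_ne_top _) (min_le_right _ _)
    have hμEfeas : ∀ u v, μE u ≤ w u v + μE v := by
      intro u v
      rcases min_cases (φ v) ((K + μ₀ v : ℝ) : EReal) with ⟨hm, -⟩ | ⟨hm, -⟩
      · simp only [hμE]
        beta_reduce
        rw [hm]
        exact le_trans (min_le_left _ _) (htri u v)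
      · simp only [hμE]
        beta_reduce
        rw [hm]
        refine le_trans (min_le_right _ _) ?_
        have h := hfeas μ₀ hμ₀ u v
        calc ((K + μ₀ u : ℝ) : EReal) = (K : EReal) + (μ₀ u : EReal) := by rw [EReal.coe_add]
        _ ≤ (K : EReal) + (w u v + (μ₀ v : EReal)) := add_le_add_right h _
        _ = w u v + ((K : EReal) + (μ₀ v : EReal)) := by
            rw [← add_assoc, add_comm (K : EReal) (w u v), add_assoc]
        _ = w u v + ((K + μ₀ v : ℝ) : EReal) := by rw [EReal.coe_add]
    set μs : V → ℝ := fun v => (μE v).toReal with hμs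
    have hμscoe : ∀ v, ((μs v : ℝ) : EReal) = μE v := fun v =>
      EReal.coe_toReal (hμEtop v) (hμEbot v)
    have hμsfeas : ∀ u v, ((μs u : EReal)) ≤ w u v + (μs v : EReal) := by
      intro u v
      rw [hμscoe, hμscoe]
      exact hμEfeas u v
    have hμsx : μs x = g := by
      have h1 : φ x = (g : EReal) := by
        simp only [hφ]; simp only [if_neg hxy]; rw [← hD, hDg]
      have h2 : μE x = (g : EReal) := by
        simp only [hμE]
        beta_reduce
        rw [h1]
        refine min_eq_left ?_
        rw [EReal.coe_le_coe_iff]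
        have : g - μ₀ x ≤ K := le_max_left _ _
        linarith
      simp only [hμs]
      beta_reduce
      rw [h2, EReal.toReal_coe]
    have hμsy : μs y = 0 := by
      have h1 : φ y = (0 : EReal) := by simp only [hφ]; simp
      have h2 : μE y = ((0:ℝ) : EReal) := by
        simp only [hμE]
        beta_reduce
        rw [h1]
        rw [show ((0:ℝ) : EReal) = (0 : EReal) from rfl]
        refine min_eq_left ?_
        rw [show (0 : EReal) = ((0:ℝ) : EReal) from rfl, EReal.coe_le_coe_iff]
        have : -(μ₀ y) ≤ K := le_max_right _ _
        linarith
      simp only [hμs]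
      beta_reduce
      rw [h2, EReal.toReal_coe]
    have hμsat : ∀ a ∈ A, μs a.1 - μs a.2.1 ≤ a.2.2.1 := by
      intro a ha
      have h1 := hμsfeas a.1 a.2.1
      have h2 := wmat_le_atom (A := A) ha
      have h3 : ((μs a.1 : ℝ) : EReal) ≤ ((a.2.2.1 + μs a.2.1 : ℝ) : EReal) := by
        rw [EReal.coe_add]
        exact le_trans h1 (add_le_add_left h2 _)
      rw [EReal.coe_le_coe_iff] at h3
      linarith
    -- convex combination argument
    by_contra hlt
    push_neg at hlt
    obtain ⟨r, hsr, hrg⟩ := EReal.exists_between_coe_real hlt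
    rw [EReal.coe_lt_coe_iff] at hrg
    set c : ℝ := μ₀ x - μ₀ y with hc
    set m : ℝ := (r + g) / 2 with hm
    have hrm : r < m := by rw [hm]; linarith
    have hmg : m < g := by rw [hm]; linarith
    by_cases hcm : m ≤ c
    · have hmem : ((c : ℝ) : EReal) ∈ (fun μ : V → ℝ => ((μ x - μ y : ℝ) : EReal)) '' {μ | asat A μ} :=
        ⟨μ₀, hμ₀, rfl⟩
      have := le_sSup hmem
      have hcontr : ((r:ℝ) : EReal) < ((c:ℝ) : EReal) := by
        rw [EReal.coe_lt_coe_iff]; linarith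
      exact absurd (lt_of_lt_of_le hcontr this) hsr.not_gt
    · push_neg at hcm
      set θ : ℝ := (m - c) / (g - c) with hθ
      have hgc : 0 < g - c := by linarith
      have hθ0 : 0 ≤ θ := div_nonneg (by linarith) (le_of_lt hgc)
      have hθ1 : θ < 1 := by
        rw [hθ, div_lt_one hgc]; linarith
      set μθ : V → ℝ := fun v => θ * μs v + (1 - θ) * μ₀ v with hμθ
      have hμθsat : asat A μθ := by
        intro a ha
        have h1 := hμsat a ha
        have h2 := hμ₀ a ha
        have hdiff : μθ a.1 - μθ a.2.1
            = θ * (μs a.1 - μs a.2.1) + (1-θ) * (μ₀ a.1 - μ₀ a.2.1) := by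
          simp only [hμθ]; ring
        have e1 : θ * (μs a.1 - μs a.2.1) ≤ θ * a.2.2.1 :=
          mul_le_mul_of_nonneg_left h1 hθ0
        cases hb2 : a.2.2.2
        · simp only [hb2, Bool.false_eq_true, if_false] at h2 ⊢
          have e2 : (1-θ) * (μ₀ a.1 - μ₀ a.2.1) ≤ (1-θ) * a.2.2.1 :=
            mul_le_mul_of_nonneg_left h2 (by linarith)
          rw [hdiff]; linarith
        · simp only [hb2, if_true] at h2 ⊢
          have e2 : (1-θ) * (μ₀ a.1 - μ₀ a.2.1) < (1-θ) * a.2.2.1 := by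
            apply mul_lt_mul_of_pos_left h2; linarith
          rw [hdiff]; linarith
      have hvalθ : μθ x - μθ y = m := by
        have hthm : θ * (g - c) = m - c := div_mul_cancel₀ _ (ne_of_gt hgc)
        have : μθ x - μθ y = θ * g + (1 - θ) * c := by
          simp only [hμθ]
          beta_reduce
          rw [hμsx, hμsy, hc]
          ring
        rw [this]; linarith [hthm]
      have hle : ((μθ x - μθ y : ℝ) : EReal)
          ≤ sSup ((fun μ : V → ℝ => ((μ x - μ y : ℝ) : EReal)) '' {μ | asat A μ}) :=
        le_sSup ⟨μθ, hμθsat, rfl⟩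
      rw [hvalθ] at hle
      have : ((m : ℝ) : EReal) < ((r : ℝ) : EReal) := lt_of_le_of_lt hle hsr
      rw [EReal.coe_lt_coe_iff] at this
      linarith

end MainMaster
section ZoneSide
variable {X : Type}

/-- The subgroup of `ℝ` generated by `1` and the prefix sums of `σ`. -/
noncomputable def GG (σ : Signal X) : AddSubgroup ℝ :=
  AddSubgroup.closure (insert (1:ℝ) {x : ℝ | ∃ i < σ.len, x = σ.pref (i+1)})

theorem GG_repr {σ : Signal X} {g : ℝ} (hg : g ∈ GG σ) :
    ∃ k : ℕ → ℤ, g = (k 0 : ℝ) + ∑ i ∈ Finset.range σ.len, (k (i+1) : ℝ) * σ.pref (i+1) := by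
  set Srep : AddSubgroup ℝ :=
    { carrier := {x : ℝ | ∃ k : ℕ → ℤ,
        x = (k 0 : ℝ) + ∑ i ∈ Finset.range σ.len, (k (i+1) : ℝ) * σ.pref (i+1)}
      zero_mem' := ⟨fun _ => 0, by simp⟩
      add_mem' := by
        rintro a b ⟨ka, rfl⟩ ⟨kb, rfl⟩
        refine ⟨fun j => ka j + kb j, ?_⟩
        push_cast
        simp only [add_mul, Finset.sum_add_distrib]
        ring
      neg_mem' := by
        rintro a ⟨ka, rfl⟩
        refine ⟨fun j => -(ka j), ?_⟩
        push_cast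
        simp only [neg_mul, Finset.sum_neg_distrib]
        ring } with hSrep
  have hle : GG σ ≤ Srep := by
    apply AddSubgroup.closure_le _ |>.2
    intro x hx
    rcases hx with rfl | ⟨i, hi, rfl⟩
    · refine ⟨fun j => if j = 0 then 1 else 0, ?_⟩
      simp
    · refine ⟨fun j => if j = i + 1 then 1 else 0, ?_⟩
      simp only [if_neg (Nat.succ_ne_zero i).symm, Int.cast_zero, zero_add]
      rw [Finset.sum_eq_single i]
      · simp
      · intro b _ hb
        simp [Nat.succ_inj, hb]
      · intro h
        exact absurd (Finset.mem_range.2 hi) h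
  exact hle hg

theorem pref_mem_GG {σ : Signal X} {i : ℕ} (hi : i ≤ σ.len) : σ.pref i ∈ GG σ := by
  cases i with
  | zero =>
    have : σ.pref 0 = 0 := by simp [Signal.pref]
    rw [this]; exact zero_mem _
  | succ j =>
    exact AddSubgroup.subset_closure (Set.mem_insert_iff.2 (Or.inr ⟨j, by omega, rfl⟩))

theorem one_mem_GG (σ : Signal X) : (1:ℝ) ∈ GG σ :=
  AddSubgroup.subset_closure (Set.mem_insert _ _)

theorem natCast_mem_GG (σ : Signal X) (n : ℕ) : ((n:ℝ)) ∈ GG σ := by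
  have := AddSubgroup.nsmul_mem (GG σ) (one_mem_GG σ) n
  rwa [nsmul_eq_mul, mul_one] at this

end ZoneSide
section Canon
variable {C : Type}

theorem asat_append {V : Type} {A B : AtomList V} {μ : V → ℝ} :
    asat (A ++ B) μ ↔ asat A μ ∧ asat B μ := by
  constructor
  · intro h
    exact ⟨fun a ha => h a (List.mem_append_left _ ha),
           fun a ha => h a (List.mem_append_right _ ha)⟩
  · rintro ⟨h1, h2⟩ a ha
    rcases List.mem_append.1 ha with ha | ha
    · exact h1 a ha
    · exact h2 a ha

theorem asat_shift {V : Type} {A : AtomList V} {μ : V → ℝ} (h : asat A μ) (t : ℝ) :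
    asat A (fun v => μ v - t) := by
  intro a ha
  have := h a ha
  have hde : (μ a.1 - t) - (μ a.2.1 - t) = μ a.1 - μ a.2.1 := by ring
  cases hb : a.2.2.2 <;> simp only [hb, Bool.false_eq_true, if_false, if_true] at this ⊢ <;>
    rw [hde] <;> exact this

/-- Bridge: images of differences over `extRef`-satisfaction and over plain satisfaction. -/
theorem image_bridge (A : AtomList (Option (ClockT C))) (c c' : Option (ClockT C)) :
    (fun ν : ClockT C → ℝ => ((extRef ν c - extRef ν c' : ℝ) : EReal)) ''
      {ν | asat A (extRef ν)}
    = (fun μ : Option (ClockT C) → ℝ => ((μ c - μ c' : ℝ) : EReal)) '' {μ | asat A μ} := by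
  ext z
  constructor
  · rintro ⟨ν, hν, rfl⟩
    exact ⟨extRef ν, hν, rfl⟩
  · rintro ⟨μ, hμ, rfl⟩
    refine ⟨fun cv => μ (some cv) - μ none, ?_, ?_⟩
    · have hsh : extRef (fun cv => μ (some cv) - μ none) = fun e => μ e - μ none := by
        funext e
        cases e with
        | none => simp [extRef]
        | some cv => simp [extRef]
      rw [Set.mem_setOf_eq, hsh]
      exact asat_shift hμ (μ none)
    · have h1 : extRef (fun cv => μ (some cv) - μ none) c = μ c - μ none := by
        cases c with
        | none => simp [extRef]
        | some cv => simp [extRef]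
      have h2 : extRef (fun cv => μ (some cv) - μ none) c' = μ c' - μ none := by
        cases c' with
        | none => simp [extRef]
        | some cv => simp [extRef]
      simp only [h1, h2]
      norm_num

theorem zoneBound_ne_bot {Z : Set (ClockT C → ℝ)} (hne : Z.Nonempty)
    (x y : Option (ClockT C)) : zoneBound Z x y ≠ ⊥ := by
  obtain ⟨ν, hν⟩ := hne
  have : ((extRef ν x - extRef ν y : ℝ) : EReal) ≤ zoneBound Z x y :=
    le_sSup ⟨ν, hν, rfl⟩
  intro h
  rw [h, le_bot_iff] at this
  exact EReal.coe_ne_bot _ this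

variable [Fintype C]

/-- The canonical atom list of a zone. -/
noncomputable def canonA (Z : Set (ClockT C → ℝ)) : AtomList (Option (ClockT C)) :=
  (Finset.univ : Finset (Option (ClockT C) × Option (ClockT C))).toList.filterMap fun p =>
    if zoneBound Z p.1 p.2 ≠ ⊤ then
      some (p.1, p.2, (zoneBound Z p.1 p.2).toReal,
        decide (¬ ∃ ν ∈ Z, (extRef ν p.1 - extRef ν p.2 : ℝ) = (zoneBound Z p.1 p.2).toReal))
    else none

theorem canonA_bounds {Z : Set (ClockT C → ℝ)} {G : AddSubgroup ℝ}
    (hP : ∀ x y, zoneBound Z x y = ⊤ ∨ ∃ g ∈ G, zoneBound Z x y = (g : EReal)) :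
    ∀ a ∈ canonA Z, a.2.2.1 ∈ G := by
  intro a ha
  rw [canonA, List.mem_filterMap] at ha
  obtain ⟨p, -, hp⟩ := ha
  split at hp
  · rename_i htop
    rcases hP p.1 p.2 with h | ⟨g, hg, h⟩
    · exact absurd h htop
    · injection hp with hp'
      subst hp'
      simp only [h, EReal.toReal_coe]
      exact hg
  · exact absurd hp (by simp)

theorem canonA_mem {Z : Set (ClockT C → ℝ)} {x y : Option (ClockT C)}
    (h : zoneBound Z x y ≠ ⊤) :
    (x, y, (zoneBound Z x y).toReal,
      decide (¬ ∃ ν ∈ Z, (extRef ν x - extRef ν y : ℝ) = (zoneBound Z x y).toReal))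
      ∈ canonA Z := by
  rw [canonA, List.mem_filterMap]
  exact ⟨(x, y), Finset.mem_toList.2 (Finset.mem_univ _), by rw [if_pos h]⟩

/-- The canonical representation of a nonempty zone. -/
theorem canon_eq {Z : Set (ClockT C → ℝ)} (hz : IsZone Z) (hne : Z.Nonempty) :
    Z = {ν | asat (canonA Z) (extRef ν)} := by
  apply Set.Subset.antisymm
  · intro ν hν a ha
    rw [canonA, List.mem_filterMap] at ha
    obtain ⟨p, -, hp⟩ := ha
    split at hp
    · rename_i htop
      injection hp with hp'
      subst hp'
      simp only
      have hle : ((extRef ν p.1 - extRef ν p.2 : ℝ) : EReal) ≤ zoneBound Z p.1 p.2 :=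
        le_sSup ⟨ν, hν, rfl⟩
      have hcoe : zoneBound Z p.1 p.2 = (((zoneBound Z p.1 p.2).toReal : ℝ) : EReal) :=
        (EReal.coe_toReal htop (zoneBound_ne_bot hne _ _)).symm
      rw [hcoe, EReal.coe_le_coe_iff] at hle
      split
      · rename_i hdec
        have hnat := of_decide_eq_true hdec
        refine lt_of_le_of_ne hle fun heq => hnat ⟨ν, hν, heq⟩
      · exact hle
    · exact absurd hp (by simp)
  · intro ν hν
    obtain ⟨atoms, hZdef⟩ := hz
    have helper : ∀ (x y : Option (ClockT C)) (b : ℝ) (st : Bool),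
        (∀ ν' ∈ Z, if st then extRef ν' x - extRef ν' y < b
          else extRef ν' x - extRef ν' y ≤ b) →
        (if st then extRef ν x - extRef ν y < b else extRef ν x - extRef ν y ≤ b) := by
      intro x y b st hall
      have hDle : zoneBound Z x y ≤ (b : EReal) := by
        apply sSup_le
        rintro _ ⟨ν', hν', rfl⟩
        rw [EReal.coe_le_coe_iff]
        have := hall ν' hν'
        cases st
        · simpa using this
        · simp only [if_true] at this; exact le_of_lt this
      have htop : zoneBound Z x y ≠ ⊤ := fun h => by
        rw [h] at hDle; exact absurd (top_le_iff.1 hDle) (EReal.coe_ne_top _)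
      have hbot := zoneBound_ne_bot hne x y
      have hsata := hν _ (canonA_mem htop)
      simp only at hsata
      have hrle : (zoneBound Z x y).toReal ≤ b := by
        have := EReal.toReal_le_toReal hDle hbot (EReal.coe_ne_top _)
        rwa [EReal.toReal_coe] at this
      have hdle : extRef ν x - extRef ν y ≤ (zoneBound Z x y).toReal := by
        split at hsata
        · exact le_of_lt hsata
        · exact hsata
      cases st
      · simp only [Bool.false_eq_true, if_false]
        linarith
      · simp only [if_true]
        rcases lt_or_eq_of_le hrle with h | h
        · linarith
        · -- toReal = b : the bound cannot be attained
          have hnat : ¬ ∃ ν' ∈ Z, (extRef ν' x - extRef ν' y : ℝ)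
              = (zoneBound Z x y).toReal := by
            rintro ⟨ν', hν', heq⟩
            have := hall ν' hν'
            simp only [if_true] at this
            rw [heq, h] at this
            exact lt_irrefl _ this
          rw [decide_eq_true hnat] at hsata
          simp only [if_true] at hsata
          linarith
    rw [hZdef]
    intro a0 ha0
    match a0 with
    | .inl (cv, op, b) =>
      have hall : ∀ ν' ∈ Z, (op.eval (ν' cv) b) := by
        intro ν' hν'
        rw [hZdef] at hν'
        exact hν' (.inl (cv, op, b)) ha0
      cases op
      · -- lt
        have := helper (some cv) none b true (fun ν' hν' => by
          simp only [if_true, extRef]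
          have := hall ν' hν'
          simp only [CmpOp.eval] at this
          linarith)
        simp only [if_true, extRef] at this
        simp only [CmpOp.eval]
        linarith
      · -- le
        have := helper (some cv) none b false (fun ν' hν' => by
          simp only [Bool.false_eq_true, if_false, extRef]
          have := hall ν' hν'
          simp only [CmpOp.eval] at this
          linarith)
        simp only [Bool.false_eq_true, if_false, extRef] at this
        simp only [CmpOp.eval]
        linarith
      · -- gt
        have := helper none (some cv) (-b) true (fun ν' hν' => by
          simp only [if_true, extRef]
          have := hall ν' hν'
          simp only [CmpOp.eval] at this
          linarith)
        simp only [if_true, extRef] at this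
        simp only [CmpOp.eval]
        linarith
      · -- ge
        have := helper none (some cv) (-b) false (fun ν' hν' => by
          simp only [Bool.false_eq_true, if_false, extRef]
          have := hall ν' hν'
          simp only [CmpOp.eval] at this
          linarith)
        simp only [Bool.false_eq_true, if_false, extRef] at this
        simp only [CmpOp.eval]
        linarith
    | .inr (cv, cv', op, b) =>
      have hall : ∀ ν' ∈ Z, (op.eval (ν' cv - ν' cv') b) := by
        intro ν' hν'
        rw [hZdef] at hν'
        exact hν' (.inr (cv, cv', op, b)) ha0
      cases op
      · have := helper (some cv) (some cv') b true (fun ν' hν' => by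
          simp only [if_true, extRef]
          have := hall ν' hν'
          simp only [CmpOp.eval] at this
          linarith)
        simp only [if_true, extRef] at this
        simp only [CmpOp.eval]
        linarith
      · have := helper (some cv) (some cv') b false (fun ν' hν' => by
          simp only [Bool.false_eq_true, if_false, extRef]
          have := hall ν' hν'
          simp only [CmpOp.eval] at this
          linarith)
        simp only [Bool.false_eq_true, if_false, extRef] at this
        simp only [CmpOp.eval]
        linarith
      · have := helper (some cv') (some cv) (-b) true (fun ν' hν' => by
          simp only [if_true, extRef]
          have := hall ν' hν'
          simp only [CmpOp.eval] at this
          linarith)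
        simp only [if_true, extRef] at this
        simp only [CmpOp.eval]
        linarith
      · have := helper (some cv') (some cv) (-b) false (fun ν' hν' => by
          simp only [Bool.false_eq_true, if_false, extRef]
          have := hall ν' hν'
          simp only [CmpOp.eval] at this
          linarith)
        simp only [Bool.false_eq_true, if_false, extRef] at this
        simp only [CmpOp.eval]
        linarith

end Canon
section Step
variable {C : Type}

/-- Translation of a clock guard into atoms. -/
noncomputable def guardA (g : Guard C) : AtomList (Option (ClockT C)) :=
  g.map fun p => match p.2.1 with
    | .lt => (some (some p.1), none, (p.2.2:ℝ), true)
    | .le => (some (some p.1), none, (p.2.2:ℝ), false)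
    | .gt => (none, some (some p.1), -(p.2.2:ℝ), true)
    | .ge => (none, some (some p.1), -(p.2.2:ℝ), false)

theorem guardA_sat {g : Guard C} {ν : ClockT C → ℝ} :
    asat (guardA g) (extRef ν) ↔ guardSat (fun c => ν (some c)) g := by
  constructor
  · intro h p hp
    obtain ⟨cl, op, n⟩ := p
    cases op
    case lt =>
      have h2 := h _ (List.mem_map.2 ⟨(cl, CmpOp.lt, n), hp, rfl⟩)
      simp only [extRef] at h2
      show ν (some cl) < (n:ℝ)
      simp at h2
      linarith
    case le =>
      have h2 := h _ (List.mem_map.2 ⟨(cl, CmpOp.le, n), hp, rfl⟩)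
      simp only [extRef] at h2
      show ν (some cl) ≤ (n:ℝ)
      simp at h2
      linarith
    case gt =>
      have h2 := h _ (List.mem_map.2 ⟨(cl, CmpOp.gt, n), hp, rfl⟩)
      simp only [extRef] at h2
      show ν (some cl) > (n:ℝ)
      simp at h2
      linarith
    case ge =>
      have h2 := h _ (List.mem_map.2 ⟨(cl, CmpOp.ge, n), hp, rfl⟩)
      simp only [extRef] at h2
      show ν (some cl) ≥ (n:ℝ)
      simp at h2
      linarith
  · intro h a ha
    rw [guardA, List.mem_map] at ha
    obtain ⟨⟨cl, op, n⟩, hp, rfl⟩ := ha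
    have h2 := h _ hp
    cases op
    case lt =>
      simp only [CmpOp.eval] at h2
      show if true = true then extRef ν (some (some cl)) - extRef ν none < (n:ℝ)
        else extRef ν (some (some cl)) - extRef ν none ≤ (n:ℝ)
      simp only [extRef, if_true]
      linarith
    case le =>
      simp only [CmpOp.eval] at h2
      show if false = true then extRef ν (some (some cl)) - extRef ν none < (n:ℝ)
        else extRef ν (some (some cl)) - extRef ν none ≤ (n:ℝ)
      simp only [extRef, Bool.false_eq_true, if_false]
      linarith
    case gt =>
      simp only [CmpOp.eval] at h2
      show if true = true then extRef ν none - extRef ν (some (some cl)) < -(n:ℝ)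
        else extRef ν none - extRef ν (some (some cl)) ≤ -(n:ℝ)
      simp only [extRef, if_true]
      linarith
    case ge =>
      simp only [CmpOp.eval] at h2
      show if false = true then extRef ν none - extRef ν (some (some cl)) < -(n:ℝ)
        else extRef ν none - extRef ν (some (some cl)) ≤ -(n:ℝ)
      simp only [extRef, Bool.false_eq_true, if_false]
      linarith

theorem guardA_bounds {X : Type} (σ : Signal X) (g : Guard C) :
    ∀ a ∈ guardA g, a.2.2.1 ∈ GG σ := by
  intro a ha
  rw [guardA, List.mem_map] at ha
  obtain ⟨p, -, rfl⟩ := ha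
  cases p.2.1 <;> simp only <;>
    first
      | exact natCast_mem_GG σ _
      | exact neg_mem (natCast_mem_GG σ _)

/-- The index remapping induced by a clock reset. -/
noncomputable def rmap (ρ : Set C) : Option (ClockT C) → Option (ClockT C)
  | none => none
  | some none => some none
  | some (some cl) => if cl ∈ ρ then none else some (some cl)

theorem reset_extRef (ν : ClockT C → ℝ) (ρ : Set C) (e : Option (ClockT C)) :
    extRef (symResetVal ν ρ) e = extRef ν (rmap ρ e) := by
  match e with
  | none => rfl
  | some none => rfl
  | some (some cl) =>
    by_cases h : cl ∈ ρ
    · simp [extRef, symResetVal, rmap, h]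
    · simp [extRef, symResetVal, rmap, h]

/-- Lifting atoms to an extended variable set. -/
noncomputable def liftA {V : Type} (A : AtomList V) : AtomList (Option V) :=
  A.map fun a => (some a.1, some a.2.1, a.2.2.1, a.2.2.2)

theorem asat_liftA {V : Type} {A : AtomList V} {μ : Option V → ℝ} :
    asat (liftA A) μ ↔ asat A (fun v => μ (some v)) := by
  constructor
  · intro h a ha
    exact h _ (List.mem_map.2 ⟨a, ha, rfl⟩)
  · intro h a ha
    rw [liftA, List.mem_map] at ha
    obtain ⟨b, hb, rfl⟩ := ha
    exact h b hb

theorem liftA_bounds {V X : Type} {σ : Signal X} {A : AtomList V}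
    (h : ∀ a ∈ A, a.2.2.1 ∈ GG σ) : ∀ a ∈ liftA A, a.2.2.1 ∈ GG σ := by
  intro a ha
  rw [liftA, List.mem_map] at ha
  obtain ⟨b, hb, rfl⟩ := ha
  exact h b hb

/-- The index remapping for time elapse. -/
noncomputable def mEx : Option (ClockT C) → Option (Option (ClockT C))
  | none => none
  | some ct => some (some ct)

end Step
section Elapse
variable {C : Type} [Fintype C]

/-- Atoms over the extended variable set for punctual time elapse. -/
noncomputable def elapseP (Z : Set (ClockT C → ℝ)) (p : ℝ) :
    AtomList (Option (Option (ClockT C))) :=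
  liftA (canonA Z) ++
    [((none : Option (Option (ClockT C))), some (none : Option (ClockT C)), (0:ℝ), true),
     (some (some (none : ClockT C)), none, p, false),
     (none, some (some (none : ClockT C)), -p, false)]

/-- Atoms over the extended variable set for open-interval time elapse. -/
noncomputable def elapseB (Z : Set (ClockT C → ℝ)) (p₁ p₂ : ℝ) :
    AtomList (Option (Option (ClockT C))) :=
  liftA (canonA Z) ++
    [((none : Option (Option (ClockT C))), some (none : Option (ClockT C)), (0:ℝ), true),
     (some (some (none : ClockT C)), none, p₂, true),
     (none, some (some (none : ClockT C)), -p₁, true)]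

theorem elapse_img_punct {Z : Set (ClockT C → ℝ)} (hz : IsZone Z) (hne : Z.Nonempty)
    (p : ℝ) (c c' : Option (ClockT C)) :
    (fun ν' : ClockT C → ℝ => ((extRef ν' c - extRef ν' c' : ℝ) : EReal)) ''
      (upClosure Z ∩ {ν | ν none = p})
    = (fun μ : Option (Option (ClockT C)) → ℝ => ((μ (mEx c) - μ (mEx c') : ℝ) : EReal)) ''
      {μ | asat (elapseP Z p) μ} := by
  ext z
  constructor
  · rintro ⟨ν', ⟨⟨ν, hν, τ, hτ, rfl⟩, hp⟩, rfl⟩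
    simp only [Set.mem_setOf_eq] at hp
    set μ : Option (Option (ClockT C)) → ℝ :=
      fun e => match e with | none => -τ | some v => extRef ν v with hμ
    have hkey : ∀ e : Option (ClockT C), extRef (fun ct => ν ct + τ) e = μ (mEx e) - μ none := by
      intro e
      cases e with
      | none => simp [extRef, mEx, hμ]
      | some ct => simp [extRef, mEx, hμ]
    refine ⟨μ, ?_, ?_⟩
    · rw [Set.mem_setOf_eq, elapseP, asat_append]
      constructor
      · rw [asat_liftA]
        have hfn : (fun v => μ (some v)) = extRef ν := by funext v; simp [hμ]
        rw [hfn]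
        have := canon_eq hz hne
        rw [this] at hν
        exact hν
      · intro a ha
        simp only [List.mem_cons, List.not_mem_nil, or_false] at ha
        rcases ha with rfl | rfl | rfl
        · simp only [if_true, hμ, extRef]
          linarith
        · simp only [Bool.false_eq_true, if_false, hμ, extRef]
          linarith
        · simp only [Bool.false_eq_true, if_false, hμ, extRef]
          linarith
    · beta_reduce
      rw [hkey c, hkey c']
      congr 1
      ring
  · rintro ⟨μ, hμsat, rfl⟩
    rw [Set.mem_setOf_eq, elapseP, asat_append] at hμsat
    obtain ⟨h1, h2⟩ := hμsat
    set t : ℝ := μ (some (none : Option (ClockT C))) with ht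
    set ν : ClockT C → ℝ := fun ct => μ (some (some ct)) - t with hν
    set τ : ℝ := t - μ none with hτdef
    have hext : extRef ν = fun v => μ (some v) - t := by
      funext v
      cases v with
      | none => simp [extRef, hν, ht]
      | some ct => simp [extRef, hν]
    have hνZ : ν ∈ Z := by
      rw [canon_eq hz hne, Set.mem_setOf_eq, hext]
      exact asat_shift (asat_liftA.1 h1) t
    have haτ := h2 _ (List.mem_cons_self)
    simp only [if_true] at haτ
    have hτpos : 0 < τ := by rw [hτdef]; linarith
    have haT1 := h2 _ (List.mem_cons_of_mem _ (List.mem_cons_self))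
    have haT2 := h2 _ (List.mem_cons_of_mem _ (List.mem_cons_of_mem _ (List.mem_cons_self)))
    simp only [Bool.false_eq_true, if_false] at haT1 haT2
    refine ⟨fun ct => ν ct + τ, ⟨⟨ν, hνZ, τ, hτpos, rfl⟩, ?_⟩, ?_⟩
    · simp only [Set.mem_setOf_eq, hν, hτdef]
      linarith
    · have hkey : ∀ e : Option (ClockT C),
          extRef (fun ct => ν ct + τ) e = μ (mEx e) - μ none := by
        intro e
        cases e with
        | none => simp [extRef, mEx]
        | some ct => simp [extRef, mEx, hν, hτdef]
      beta_reduce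
      rw [hkey c, hkey c']
      congr 1
      ring

theorem elapse_img_band {Z : Set (ClockT C → ℝ)} (hz : IsZone Z) (hne : Z.Nonempty)
    (p₁ p₂ : ℝ) (c c' : Option (ClockT C)) :
    (fun ν' : ClockT C → ℝ => ((extRef ν' c - extRef ν' c' : ℝ) : EReal)) ''
      (upClosure Z ∩ {ν | p₁ < ν none ∧ ν none < p₂})
    = (fun μ : Option (Option (ClockT C)) → ℝ => ((μ (mEx c) - μ (mEx c') : ℝ) : EReal)) ''
      {μ | asat (elapseB Z p₁ p₂) μ} := by
  ext z
  constructor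
  · rintro ⟨ν', ⟨⟨ν, hν, τ, hτ, rfl⟩, hp⟩, rfl⟩
    simp only [Set.mem_setOf_eq] at hp
    obtain ⟨hp1, hp2⟩ := hp
    set μ : Option (Option (ClockT C)) → ℝ :=
      fun e => match e with | none => -τ | some v => extRef ν v with hμ
    have hkey : ∀ e : Option (ClockT C), extRef (fun ct => ν ct + τ) e = μ (mEx e) - μ none := by
      intro e
      cases e with
      | none => simp [extRef, mEx, hμ]
      | some ct => simp [extRef, mEx, hμ]
    refine ⟨μ, ?_, ?_⟩
    · rw [Set.mem_setOf_eq, elapseB, asat_append]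
      constructor
      · rw [asat_liftA]
        have hfn : (fun v => μ (some v)) = extRef ν := by funext v; simp [hμ]
        rw [hfn]
        have := canon_eq hz hne
        rw [this] at hν
        exact hν
      · intro a ha
        simp only [List.mem_cons, List.not_mem_nil, or_false] at ha
        rcases ha with rfl | rfl | rfl
        · simp only [if_true, hμ, extRef]
          linarith
        · simp only [if_true, hμ, extRef]
          linarith
        · simp only [if_true, hμ, extRef]
          linarith
    · beta_reduce
      rw [hkey c, hkey c']
      congr 1
      ring
  · rintro ⟨μ, hμsat, rfl⟩
    rw [Set.mem_setOf_eq, elapseB, asat_append] at hμsat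
    obtain ⟨h1, h2⟩ := hμsat
    set t : ℝ := μ (some (none : Option (ClockT C))) with ht
    set ν : ClockT C → ℝ := fun ct => μ (some (some ct)) - t with hν
    set τ : ℝ := t - μ none with hτdef
    have hext : extRef ν = fun v => μ (some v) - t := by
      funext v
      cases v with
      | none => simp [extRef, hν, ht]
      | some ct => simp [extRef, hν]
    have hνZ : ν ∈ Z := by
      rw [canon_eq hz hne, Set.mem_setOf_eq, hext]
      exact asat_shift (asat_liftA.1 h1) t
    have haτ := h2 _ (List.mem_cons_self)
    simp only [if_true] at haτ
    have hτpos : 0 < τ := by rw [hτdef]; linarith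
    have haT1 := h2 _ (List.mem_cons_of_mem _ (List.mem_cons_self))
    have haT2 := h2 _ (List.mem_cons_of_mem _ (List.mem_cons_of_mem _ (List.mem_cons_self)))
    simp only [if_true] at haT1 haT2
    refine ⟨fun ct => ν ct + τ, ⟨⟨ν, hνZ, τ, hτpos, rfl⟩, ?_⟩, ?_⟩
    · simp only [Set.mem_setOf_eq, hν, hτdef]
      constructor <;> linarith
    · have hkey : ∀ e : Option (ClockT C),
          extRef (fun ct => ν ct + τ) e = μ (mEx e) - μ none := by
        intro e
        cases e with
        | none => simp [extRef, mEx]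
        | some ct => simp [extRef, mEx, hν, hτdef]
      beta_reduce
      rw [hkey c, hkey c']
      congr 1
      ring

end Elapse
section InvStep
variable {X L C : Type} [Fintype C]

theorem inv_step {σ : Signal X} {A : TSA X L C} {q q' : SymState X L C}
    (hstep : symStep σ A q q')
    (IH : ∀ x y, zoneBound q.2.1 x y = ⊤ ∨ ∃ g ∈ GG σ, zoneBound q.2.1 x y = (g:EReal)) :
    ∀ x y, zoneBound q'.2.1 x y = ⊤ ∨ ∃ g ∈ GG σ, zoneBound q'.2.1 x y = (g:EReal) := by
  obtain ⟨hq, hq', hcase⟩ := hstep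
  obtain ⟨hzZ, hneZ, -, -⟩ := hq
  obtain ⟨hzZ', hneZ', -, -⟩ := hq'
  intro x y
  rcases hcase with ⟨g, ρ, -, hZ', -, -⟩ | ⟨-, -, i, h1i, hilen, hZ'⟩
  · -- discrete transition
    set Gset : Set (ClockT C → ℝ) := {ν | guardSat (fun c => ν (some c)) g} with hGset
    have hZ'img : q'.2.1 = (fun ν => symResetVal ν ρ) '' (q.2.1 ∩ Gset) := by
      rw [hZ']
      ext ν'
      simp only [Set.mem_setOf_eq, Set.mem_image, Set.mem_inter_iff, hGset]
      constructor
      · rintro ⟨ν, h1, h2, h3⟩; exact ⟨ν, ⟨h1, h2⟩, h3.symm⟩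
      · rintro ⟨ν, ⟨h1, h2⟩, h3⟩; exact ⟨ν, h1, h2, h3.symm⟩
    have hsetEq : q.2.1 ∩ Gset = {ν | asat (canonA q.2.1 ++ guardA g) (extRef ν)} := by
      ext ν
      rw [Set.mem_inter_iff]
      simp only [Set.mem_setOf_eq]
      rw [asat_append]
      constructor
      · rintro ⟨h1, h2⟩
        rw [canon_eq hzZ hneZ] at h1
        exact ⟨h1, guardA_sat.2 h2⟩
      · rintro ⟨h1, h2⟩
        rw [canon_eq hzZ hneZ]
        exact ⟨h1, guardA_sat.1 h2⟩
    have himg : (fun ν' => ((extRef ν' x - extRef ν' y : ℝ) : EReal)) '' q'.2.1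
        = (fun ν => ((extRef ν (rmap ρ x) - extRef ν (rmap ρ y) : ℝ) : EReal))
            '' (q.2.1 ∩ Gset) := by
      rw [hZ'img, Set.image_image]
      apply Set.image_congr
      intro ν _
      rw [reset_extRef, reset_extRef]
    have hnemaster : ∃ μ : Option (ClockT C) → ℝ, asat (canonA q.2.1 ++ guardA g) μ := by
      obtain ⟨ν', hν'⟩ := hneZ'
      rw [hZ'img] at hν'
      obtain ⟨ν, hν, -⟩ := hν'
      rw [hsetEq] at hν
      exact ⟨extRef ν, hν⟩
    have hbounds : ∀ a ∈ canonA q.2.1 ++ guardA g, a.2.2.1 ∈ GG σ := by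
      intro a ha
      rcases List.mem_append.1 ha with h | h
      · exact canonA_bounds IH a h
      · exact guardA_bounds σ g a h
    have hmb := master_bound (V := Option (ClockT C)) hbounds hnemaster (rmap ρ x) (rmap ρ y)
    have hzb : zoneBound q'.2.1 x y
        = sSup ((fun μ : Option (ClockT C) → ℝ =>
            ((μ (rmap ρ x) - μ (rmap ρ y) : ℝ) : EReal)) ''
            {μ | asat (canonA q.2.1 ++ guardA g) μ}) := by
      rw [zoneBound, himg, hsetEq, image_bridge]
    rw [hzb]
    exact hmb
  · -- time elapse
    rcases hZ' with hZ' | hZ'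
    · -- punctual
      have himg := elapse_img_punct hzZ hneZ (σ.pref i) x y
      have hbounds : ∀ a ∈ elapseP q.2.1 (σ.pref i), a.2.2.1 ∈ GG σ := by
        intro a ha
        rcases List.mem_append.1 ha with h | h
        · exact liftA_bounds (canonA_bounds IH) a h
        · simp only [List.mem_cons, List.not_mem_nil, or_false] at h
          rcases h with rfl | rfl | rfl
          · exact zero_mem _
          · exact pref_mem_GG hilen
          · exact neg_mem (pref_mem_GG hilen)
      have hnemaster : ∃ μ : Option (Option (ClockT C)) → ℝ,
          asat (elapseP q.2.1 (σ.pref i)) μ := by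
        obtain ⟨ν', hν'⟩ := hneZ'
        rw [hZ'] at hν'
        have hmem : ((extRef ν' x - extRef ν' y : ℝ) : EReal)
            ∈ (fun ν' : ClockT C → ℝ => ((extRef ν' x - extRef ν' y : ℝ) : EReal)) ''
              (upClosure q.2.1 ∩ {ν | ν none = σ.pref i}) := ⟨ν', hν', rfl⟩
        rw [himg] at hmem
        obtain ⟨μ, hμ, -⟩ := hmem
        exact ⟨μ, hμ⟩
      have hmb := master_bound (V := Option (Option (ClockT C))) hbounds hnemaster (mEx x) (mEx y)
      have hzb : zoneBound q'.2.1 x y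
          = sSup ((fun μ : Option (Option (ClockT C)) → ℝ =>
              ((μ (mEx x) - μ (mEx y) : ℝ) : EReal)) ''
              {μ | asat (elapseP q.2.1 (σ.pref i)) μ}) := by
        rw [zoneBound, hZ', himg]
      rw [hzb]
      exact hmb
    · -- band
      have himg := elapse_img_band hzZ hneZ (σ.pref (i-1)) (σ.pref i) x y
      have hbounds : ∀ a ∈ elapseB q.2.1 (σ.pref (i-1)) (σ.pref i), a.2.2.1 ∈ GG σ := by
        intro a ha
        rcases List.mem_append.1 ha with h | h
        · exact liftA_bounds (canonA_bounds IH) a h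
        · simp only [List.mem_cons, List.not_mem_nil, or_false] at h
          rcases h with rfl | rfl | rfl
          · exact zero_mem _
          · exact pref_mem_GG hilen
          · exact neg_mem (pref_mem_GG (by omega))
      have hnemaster : ∃ μ : Option (Option (ClockT C)) → ℝ,
          asat (elapseB q.2.1 (σ.pref (i-1)) (σ.pref i)) μ := by
        obtain ⟨ν', hν'⟩ := hneZ'
        rw [hZ'] at hν'
        have hmem : ((extRef ν' x - extRef ν' y : ℝ) : EReal)
            ∈ (fun ν' : ClockT C → ℝ => ((extRef ν' x - extRef ν' y : ℝ) : EReal)) ''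
              (upClosure q.2.1 ∩ {ν | σ.pref (i-1) < ν none ∧ ν none < σ.pref i}) :=
          ⟨ν', hν', rfl⟩
        rw [himg] at hmem
        obtain ⟨μ, hμ, -⟩ := hmem
        exact ⟨μ, hμ⟩
      have hmb := master_bound (V := Option (Option (ClockT C))) hbounds hnemaster (mEx x) (mEx y)
      have hzb : zoneBound q'.2.1 x y
          = sSup ((fun μ : Option (Option (ClockT C)) → ℝ =>
              ((μ (mEx x) - μ (mEx y) : ℝ) : EReal)) ''
              {μ | asat (elapseB q.2.1 (σ.pref (i-1)) (σ.pref i)) μ}) := by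
        rw [zoneBound, hZ', himg]
      rw [hzb]
      exact hmb

end InvStep

/-- For every reachable symbolic state `(l,Z,ā)` of the WSTTS of
`σ = a₁^{τ₁}⋯a_n^{τ_n}` and `W`, and all `c,c' ∈ C⊔{T,0}`, the canonical zone bound
`d_{Z,c,c'}` is either `∞`, or of the form `k₀ + Σ_{i=1}^{n} kᵢ·(τ₁+⋯+τᵢ)` for some
integers `k₀,…,k_n`. -/
theorem statement4 {X L C S : Type} [Finite X] [Finite L] [Finite C]
    [CSemiring S] [CompleteCSemiring S]
    (W : TSWA X L C S) (σ : Signal X) :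
    ∀ q ∈ reach (symStep σ W.toTSA) (symQ0 W.toTSA),
      ∀ c c' : Option (ClockT C),
        zoneBound q.2.1 c c' = ⊤ ∨
        ∃ k : ℕ → ℤ, zoneBound q.2.1 c c' =
          (((k 0 : ℝ) + ∑ i ∈ Finset.range σ.len, (k (i+1) : ℝ) * σ.pref (i+1) : ℝ) : EReal) := by
  classical
  have hFC : Fintype C := Fintype.ofFinite C
  intro q hq c c'
  obtain ⟨q0, hq0, hrtg⟩ := hq
  have hInv : ∀ x y : Option (ClockT C), zoneBound q.2.1 x y = ⊤ ∨
      ∃ g ∈ GG σ, zoneBound q.2.1 x y = (g : EReal) := by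
    induction hrtg with
    | refl =>
      intro x y
      obtain ⟨-, hZeq, -⟩ := hq0
      right
      refine ⟨0, zero_mem _, ?_⟩
      have hz0 : ∀ e : Option (ClockT C), extRef zeroValT e = (0:ℝ) := by
        intro e; cases e <;> rfl
      rw [hZeq, zoneBound, Set.image_singleton, sSup_singleton, hz0, hz0]
      norm_num
    | tail hsteps hstep ih => exact inv_step hstep ih
  rcases hInv c c' with h | ⟨g, hg, heq⟩
  · exact Or.inl h
  · obtain ⟨k, hk⟩ := GG_repr hg
    exact Or.inr ⟨k, by rw [heq, hk]⟩

end QTPM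
end
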